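/- arXiv:2306.14600 — 4 statements merged into one kernel-verified Lean document; each statement's English description precedes it below -/
import Mathlib

section
/- Let d ∈ {2,3} and k ≥ 2. The linear map ℒ : [𝒫^k(ℝ^d)]^d × 𝒫^{k-1}(ℝ^d) → [𝒫^{k-2}(ℝ^d)]^d × 𝒫^{k-1}(ℝ^d) defined by ℒ(v,q) = (−Δv + ∇q, −div v) is surjective; that is, for every vector polynomial f with components in 𝒫^{k-2}(ℝ^d) and every g ∈ 𝒫^{k-1}(ℝ^d) there exist v with components in 𝒫^k(ℝ^d) and q ∈ 𝒫^{k-1}(ℝ^d) such that −Δv + ∇q = f and −div v = g. -/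
open MvPolynomial

/-- The formal Laplacian `Δp = ∑ⱼ ∂ⱼ∂ⱼp` of a polynomial in `d` variables. -/
noncomputable def lap {d : ℕ} (p : MvPolynomial (Fin d) ℝ) : MvPolynomial (Fin d) ℝ :=
  ∑ j, pderiv j (pderiv j p)

/-- The formal divergence `div v = ∑ᵢ ∂ᵢvᵢ` of a polynomial vector field. -/
noncomputable def pdiv {d : ℕ} (v : Fin d → MvPolynomial (Fin d) ℝ) : MvPolynomial (Fin d) ℝ :=
  ∑ i, pderiv i (v i)

namespace StokesAux

variable {d : ℕ}

/-- The total size of a multi-index. -/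
def msz (α : Fin d →₀ ℕ) : ℕ := ∑ j, α j

lemma msz_add (α β : Fin d →₀ ℕ) : msz (α + β) = msz α + msz β := by
  simp [msz, Finset.sum_add_distrib]

lemma msz_single (j : Fin d) (n : ℕ) : msz (Finsupp.single j n) = n := by
  simp [msz, Finsupp.single_apply]

lemma finsuppSum_eq_msz (α : Fin d →₀ ℕ) : (α.sum fun _ e => e) = msz α :=
  Finsupp.sum_fintype _ _ (fun _ => rfl)

lemma td_monomial_le (α : Fin d →₀ ℕ) (c : ℝ) :
    (monomial α c).totalDegree ≤ msz α :=
  (totalDegree_monomial_le α c).trans (le_of_eq (finsuppSum_eq_msz α))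

lemma mem_support_msz_le {p : MvPolynomial (Fin d) ℝ} {α : Fin d →₀ ℕ}
    (h : α ∈ p.support) : msz α ≤ p.totalDegree := by
  rw [← finsuppSum_eq_msz]; exact le_totalDegree h

lemma sub_single_one_add {α : Fin d →₀ ℕ} {i : Fin d} (h : α i ≠ 0) :
    (α - Finsupp.single i 1) + Finsupp.single i 1 = α := by
  ext j
  simp only [Finsupp.coe_add, Finsupp.coe_tsub, Pi.add_apply, Pi.sub_apply,
    Finsupp.single_apply]
  rcases eq_or_ne i j with rfl | hij
  · rw [if_pos rfl]; omega
  · rw [if_neg hij]; omega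

lemma td_pderiv_le (i : Fin d) (p : MvPolynomial (Fin d) ℝ) {n : ℕ}
    (h : p.totalDegree ≤ n + 1) : (pderiv i p).totalDegree ≤ n := by
  conv_lhs => rw [p.as_sum]
  rw [map_sum]
  refine totalDegree_finsetSum_le fun α hα => ?_
  rw [pderiv_monomial]
  by_cases h0 : α i = 0
  · simp [h0]
  · refine (td_monomial_le _ _).trans ?_
    have h1 : msz (α - Finsupp.single i 1) + 1 = msz α := by
      conv_rhs => rw [← sub_single_one_add h0]
      rw [msz_add, msz_single]
    have h2 : msz α ≤ n + 1 := (mem_support_msz_le hα).trans h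
    omega

lemma pderiv_pderiv_comm (i j : Fin d) (p : MvPolynomial (Fin d) ℝ) :
    pderiv i (pderiv j p) = pderiv j (pderiv i p) := by
  rcases eq_or_ne i j with rfl | hij
  · rfl
  · conv_lhs => rw [p.as_sum]
    conv_rhs => rw [p.as_sum]
    rw [map_sum, map_sum, map_sum, map_sum]
    refine Finset.sum_congr rfl fun α _ => ?_
    rw [pderiv_monomial, pderiv_monomial, pderiv_monomial, pderiv_monomial]
    have he : α - Finsupp.single j 1 - Finsupp.single i 1
        = α - Finsupp.single i 1 - Finsupp.single j 1 := by
      ext m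
      simp only [Finsupp.coe_tsub, Pi.sub_apply]
      omega
    have h1 : (α - Finsupp.single j 1 : Fin d →₀ ℕ) i = α i := by
      rw [Finsupp.tsub_apply, Finsupp.single_eq_of_ne' (Ne.symm hij), Nat.sub_zero]
    have h2 : (α - Finsupp.single i 1 : Fin d →₀ ℕ) j = α j := by
      rw [Finsupp.tsub_apply, Finsupp.single_eq_of_ne' hij, Nat.sub_zero]
    rw [he, h1, h2, mul_right_comm]

lemma lap_add (p q : MvPolynomial (Fin d) ℝ) : lap (p + q) = lap p + lap q := by
  simp [lap, Finset.sum_add_distrib]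

lemma lap_sub (p q : MvPolynomial (Fin d) ℝ) : lap (p - q) = lap p - lap q := by
  simp [lap, Finset.sum_sub_distrib]

lemma lap_neg (p : MvPolynomial (Fin d) ℝ) : lap (-p) = -lap p := by
  simp [lap, Finset.sum_neg_distrib]

lemma lap_sum {ι : Type*} (s : Finset ι) (f : ι → MvPolynomial (Fin d) ℝ) :
    lap (∑ x ∈ s, f x) = ∑ x ∈ s, lap (f x) := by
  classical
  induction s using Finset.induction_on with
  | empty => simp [lap]
  | insert x s hx ih => rw [Finset.sum_insert hx, lap_add, ih, Finset.sum_insert hx]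

lemma lap_pderiv (i : Fin d) (p : MvPolynomial (Fin d) ℝ) :
    lap (pderiv i p) = pderiv i (lap p) := by
  unfold lap
  rw [map_sum]
  refine Finset.sum_congr rfl fun j _ => ?_
  rw [pderiv_pderiv_comm j i p, pderiv_pderiv_comm j i (pderiv j p)]

lemma td_lap_le (p : MvPolynomial (Fin d) ℝ) {n : ℕ} (h : p.totalDegree ≤ n + 2) :
    (lap p).totalDegree ≤ n := by
  refine totalDegree_finsetSum_le fun j _ => ?_
  exact td_pderiv_le j _ (td_pderiv_le j p h)

/-- Key lemma: the formal Laplacian is surjective, with degree control,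
for a single monomial. `N` bounds the degree in the variables other than `0`. -/
lemma lap_surj_monomial (hd : 0 < d) :
    ∀ N : ℕ, ∀ (α : Fin d →₀ ℕ) (c : ℝ),
      (∑ j ∈ Finset.univ.erase (⟨0, hd⟩ : Fin d), α j) ≤ N →
      ∀ m : ℕ, msz α ≤ m →
      ∃ φ : MvPolynomial (Fin d) ℝ, φ.totalDegree ≤ m + 2 ∧ lap φ = monomial α c := by
  intro N
  induction N using Nat.strong_induction_on with
  | _ N IH =>
    intro α c hw m hm
    set i0 : Fin d := ⟨0, hd⟩ with hi0
    set x : ℝ := (α i0 : ℝ) with hx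
    set c' : ℝ := c / ((x + 1) * (x + 2)) with hc'
    set s : Fin d →₀ ℕ := α + Finsupp.single i0 2 with hs
    have hsj : ∀ j : Fin d, j ≠ i0 → s j = α j := by
      intro j hj
      simp [hs, Finsupp.single_apply, Ne.symm hj]
    have hsi0 : s i0 = α i0 + 2 := by simp [hs]
    -- the double partial derivative of the candidate monomial
    have key : ∀ j : Fin d, pderiv j (pderiv j (monomial s c'))
        = monomial (s - Finsupp.single j 1 - Finsupp.single j 1)
            (c' * (s j : ℝ) * ((s j - 1 : ℕ) : ℝ)) := by
      intro j
      rw [pderiv_monomial, pderiv_monomial]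
      have h' : (s - Finsupp.single j 1 : Fin d →₀ ℕ) j = s j - 1 := by
        rw [Finsupp.tsub_apply, Finsupp.single_eq_same]
      rw [h']
    -- the term for j = i0 is the target monomial
    have hmain : pderiv i0 (pderiv i0 (monomial s c')) = monomial α c := by
      rw [key i0]
      have he : s - Finsupp.single i0 1 - Finsupp.single i0 1 = α := by
        ext j
        rw [Finsupp.tsub_apply, Finsupp.tsub_apply, hs, Finsupp.add_apply]
        rcases eq_or_ne i0 j with rfl | hj
        · simp only [Finsupp.single_eq_same]; omega
        · simp only [Finsupp.single_eq_of_ne' hj]; omega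
      rw [he]
      congr 1
      rw [hsi0]
      have h1 : (x + 1) ≠ 0 := by positivity
      have h2 : (x + 2) ≠ 0 := by positivity
      have : ((α i0 + 2 - 1 : ℕ) : ℝ) = x + 1 := by push_cast [hx]; ring
      rw [this]
      push_cast [hc', hx]
      field_simp
    -- for j ≠ i0 the terms are hit by induction
    have hrest : ∀ j ∈ Finset.univ.erase i0, ∃ ψ : MvPolynomial (Fin d) ℝ,
        ψ.totalDegree ≤ m + 2 ∧ lap ψ = pderiv j (pderiv j (monomial s c')) := by
      intro j hj
      have hjne : j ≠ i0 := Finset.ne_of_mem_erase hj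
      rw [key j]
      by_cases hαj : α j ≤ 1
      · refine ⟨0, by simp [lap], ?_⟩
        have hlz : lap (0 : MvPolynomial (Fin d) ℝ) = 0 := by simp [lap]
        rw [hlz]
        symm
        rw [monomial_eq_zero]
        rcases Nat.le_one_iff_eq_zero_or_eq_one.mp hαj with h | h <;>
          simp [hsj j hjne, h]
      · push_neg at hαj
        set β : Fin d →₀ ℕ := s - Finsupp.single j 1 - Finsupp.single j 1 with hβ
        have hβj : β + Finsupp.single j 2 = s := by
          ext m'
          rw [Finsupp.add_apply, hβ, Finsupp.tsub_apply, Finsupp.tsub_apply]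
          rcases eq_or_ne j m' with rfl | hm'
          · simp only [Finsupp.single_eq_same]
            have hsa : s j = α j := hsj j hjne
            omega
          · simp only [Finsupp.single_eq_of_ne' hm']; omega
        -- msz β ≤ m
        have hms : msz β + 2 = msz s := by
          rw [← hβj, msz_add, msz_single]
        have hmss : msz s = msz α + 2 := by rw [hs, msz_add, msz_single]
        have hmsz : msz β ≤ m := by omega
        -- weighted size of β
        have hwβ : (∑ j' ∈ Finset.univ.erase i0, β j') + 2
            = ∑ j' ∈ Finset.univ.erase i0, α j' := by
          have e1 : ∀ j' ∈ Finset.univ.erase i0, β j' + Finsupp.single j 2 j' = s j' := by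
            intro j' _; rw [← hβj]; simp
          have e2 : ∑ j' ∈ Finset.univ.erase i0, (β j' + Finsupp.single j 2 j')
              = ∑ j' ∈ Finset.univ.erase i0, s j' := Finset.sum_congr rfl e1
          rw [Finset.sum_add_distrib] at e2
          have e3 : ∑ j' ∈ Finset.univ.erase i0, Finsupp.single j 2 j' = 2 := by
            rw [Finset.sum_eq_single j]
            · simp
            · intro b _ hb; simp [Finsupp.single_apply, Ne.symm hb]
            · intro hcon; exact absurd (Finset.mem_erase.mpr ⟨hjne, Finset.mem_univ j⟩) hcon
          have e4 : ∑ j' ∈ Finset.univ.erase i0, s j'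
              = ∑ j' ∈ Finset.univ.erase i0, α j' := by
            refine Finset.sum_congr rfl fun j' hj' => hsj j' (Finset.ne_of_mem_erase hj')
          omega
        have hNge : 2 ≤ N := by
          have : α j ≤ ∑ j' ∈ Finset.univ.erase i0, α j' :=
            Finset.single_le_sum (fun _ _ => Nat.zero_le _)
              (Finset.mem_erase.mpr ⟨hjne, Finset.mem_univ j⟩)
          exact le_trans hαj (le_trans this hw)
        have hwlt : (∑ j' ∈ Finset.univ.erase i0, β j') ≤ N - 2 := by omega
        exact IH (N - 2) (by omega) β _ hwlt m hmsz
    choose ψ hψd hψl using hrest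
    refine ⟨monomial s c' - ∑ j ∈ (Finset.univ.erase i0).attach, ψ j j.2, ?_, ?_⟩
    · refine (totalDegree_sub _ _).trans (max_le ?_ ?_)
      · refine (td_monomial_le _ _).trans ?_
        rw [hs, msz_add, msz_single]; omega
      · exact totalDegree_finsetSum_le fun j _ => hψd j j.2
    · rw [lap_sub, lap_sum]
      have : ∑ j ∈ (Finset.univ.erase i0).attach, lap (ψ j j.2)
          = ∑ j ∈ Finset.univ.erase i0, pderiv j (pderiv j (monomial s c')) := by
        rw [← Finset.sum_attach (Finset.univ.erase i0)
          (fun j => pderiv j (pderiv j (monomial s c')))]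
        exact Finset.sum_congr rfl fun j _ => hψl j j.2
      rw [this]
      have hsplit : lap (monomial s c')
          = pderiv i0 (pderiv i0 (monomial s c'))
            + ∑ j ∈ Finset.univ.erase i0, pderiv j (pderiv j (monomial s c')) := by
        rw [lap, ← Finset.add_sum_erase _ _ (Finset.mem_univ i0)]
      rw [hsplit, hmain]
      ring

/-- The formal Laplacian is surjective on polynomials, with degree control. -/
lemma lap_surj (hd : 0 < d) (m : ℕ) (g : MvPolynomial (Fin d) ℝ)
    (hg : g.totalDegree ≤ m) :
    ∃ φ : MvPolynomial (Fin d) ℝ, φ.totalDegree ≤ m + 2 ∧ lap φ = g := by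
  have H : ∀ α ∈ g.support, ∃ φ : MvPolynomial (Fin d) ℝ,
      φ.totalDegree ≤ m + 2 ∧ lap φ = monomial α (coeff α g) := by
    intro α hα
    exact lap_surj_monomial hd _ α _ le_rfl m ((mem_support_msz_le hα).trans hg)
  choose φ hφd hφl using H
  refine ⟨∑ α ∈ g.support.attach, φ α α.2, ?_, ?_⟩
  · exact totalDegree_finsetSum_le fun α _ => hφd α α.2
  · rw [lap_sum]
    have : ∑ α ∈ g.support.attach, lap (φ α α.2)
        = ∑ α ∈ g.support, monomial α (coeff α g) := by
      rw [← Finset.sum_attach g.support (fun α => monomial α (coeff α g))]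
      exact Finset.sum_congr rfl fun α _ => hφl α α.2
    rw [this, ← g.as_sum]

end StokesAux

open StokesAux

/-- The pointwise Stokes operator `ℒ(v, q) = (−Δv + ∇q, −div v)` maps
`[𝒫ᵏ(ℝᵈ)]ᵈ × 𝒫^{k-1}(ℝᵈ)` onto `[𝒫^{k-2}(ℝᵈ)]ᵈ × 𝒫^{k-1}(ℝᵈ)` for `d ∈ {2, 3}` and `k ≥ 2`. -/
theorem stokes_operator_surjective (d k : ℕ) (hd : d = 2 ∨ d = 3) (hk : 2 ≤ k)
    (f : Fin d → MvPolynomial (Fin d) ℝ) (hf : ∀ i, (f i).totalDegree ≤ k - 2)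
    (g : MvPolynomial (Fin d) ℝ) (hg : g.totalDegree ≤ k - 1) :
    ∃ (v : Fin d → MvPolynomial (Fin d) ℝ) (q : MvPolynomial (Fin d) ℝ),
      (∀ i, (v i).totalDegree ≤ k) ∧ q.totalDegree ≤ k - 1 ∧
      (∀ i, -lap (v i) + pderiv i q = f i) ∧ -pdiv v = g := by
  have hd0 : 0 < d := by rcases hd with rfl | rfl <;> norm_num
  -- solve Δφ = -g
  obtain ⟨φ, hφd, hφl⟩ := lap_surj hd0 (k - 1) (-g) (by rwa [totalDegree_neg])
  -- solve Δ(w i) = f i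
  have hw : ∀ i, ∃ w : MvPolynomial (Fin d) ℝ, w.totalDegree ≤ k ∧ lap w = f i := by
    intro i
    obtain ⟨w, hwd, hwl⟩ := lap_surj hd0 (k - 2) (f i) (hf i)
    exact ⟨w, by omega, hwl⟩
  choose w hwd hwl using hw
  -- solve Δ(U i) = w i
  have hU : ∀ i, ∃ U : MvPolynomial (Fin d) ℝ, U.totalDegree ≤ k + 2 ∧ lap U = w i := by
    intro i
    obtain ⟨U, hUd, hUl⟩ := lap_surj hd0 k (w i) (hwd i)
    exact ⟨U, hUd, hUl⟩
  choose U hUd hUl using hU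
  -- assemble
  set v : Fin d → MvPolynomial (Fin d) ℝ :=
    fun i => pderiv i φ - w i + pderiv i (pdiv U) with hv
  set q : MvPolynomial (Fin d) ℝ := -g + lap (pdiv U) with hq
  have hφdeg : φ.totalDegree ≤ k + 1 := by
    have : k - 1 + 2 = k + 1 := by omega
    omega
  have hpdivU : (pdiv U).totalDegree ≤ k + 1 := by
    refine totalDegree_finsetSum_le fun i _ => ?_
    exact td_pderiv_le i (U i) (hUd i)
  have hlapdivU : lap (pdiv U) = pdiv (fun i => lap (U i)) := by
    unfold pdiv
    rw [lap_sum]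
    refine Finset.sum_congr rfl fun i _ => lap_pderiv i (U i)
  refine ⟨v, q, ?_, ?_, ?_, ?_⟩
  · intro i
    refine (totalDegree_add _ _).trans (max_le ((totalDegree_sub _ _).trans
      (max_le ?_ (hwd i))) ?_)
    · exact td_pderiv_le i φ (by omega)
    · exact td_pderiv_le i (pdiv U) hpdivU
  · refine (totalDegree_add _ _).trans (max_le (by rwa [totalDegree_neg]) ?_)
    have h2 : (lap (pdiv U)).totalDegree ≤ k - 1 := by
      refine td_lap_le (pdiv U) ?_
      omega
    exact h2
  · intro i
    rw [hv, hq]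
    rw [lap_add, lap_sub, lap_pderiv, lap_pderiv, hφl, hwl, map_add, map_neg]
    ring
  · have hfinal : pdiv v = -g := by
      have hvdef : pdiv v = ∑ i, pderiv i (v i) := rfl
      rw [hvdef]
      have hsplit : ∀ i : Fin d, pderiv i (v i)
          = pderiv i (pderiv i φ) - pderiv i (w i) + pderiv i (pderiv i (pdiv U)) := by
        intro i
        rw [hv]
        simp only [map_add, map_sub]
      rw [Finset.sum_congr rfl (fun i _ => hsplit i), Finset.sum_add_distrib,
        Finset.sum_sub_distrib]
      have e1 : ∑ i, pderiv i (pderiv i φ) = lap φ := rfl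
      have e2 : ∑ i, pderiv i (pderiv i (pdiv U)) = lap (pdiv U) := rfl
      have e3 : (∑ i, pderiv i (w i)) = pdiv w := rfl
      have e4 : pdiv (fun i => lap (U i)) = pdiv w := by
        unfold pdiv
        exact Finset.sum_congr rfl fun i _ => by simp [hUl]
      rw [e1, e2, e3, hφl, hlapdivU, e4]
      ring
    rw [hfinal, neg_neg]
end

section
/- Let k ≥ 2. Every vector field f with components in 𝒫^{k-2}(ℝ³) can be written as f = curl v₁ + ∇v₂ for some vector field v₁ with components in 𝒫^{k-1}(ℝ³) and some scalar v₂ ∈ 𝒫^{k-1}(ℝ³); that is, [𝒫^{k-2}(ℝ³)]³ = curl[𝒫^{k-1}(ℝ³)]³ + ∇𝒫^{k-1}(ℝ³). -/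
open MvPolynomial

/-- The formal curl of a polynomial vector field on `ℝ³`:
`curl v = (∂₂v₃ − ∂₃v₂, ∂₃v₁ − ∂₁v₃, ∂₁v₂ − ∂₂v₁)` (0-based indices). -/
noncomputable def curl3 (v : Fin 3 → MvPolynomial (Fin 3) ℝ) : Fin 3 → MvPolynomial (Fin 3) ℝ :=
  ![pderiv 1 (v 2) - pderiv 2 (v 1),
    pderiv 2 (v 0) - pderiv 0 (v 2),
    pderiv 0 (v 1) - pderiv 1 (v 0)]

/-! ### Auxiliary material -/

/-- The exponent unit vector for variable `j`. -/
noncomputable def ee (j : Fin 3) : Fin 3 →₀ ℕ := Finsupp.single j 1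

/-- The formal antiderivative in variable `i`. -/
noncomputable def antid (i : Fin 3) (p : MvPolynomial (Fin 3) ℝ) : MvPolynomial (Fin 3) ℝ :=
  ∑ α ∈ p.support, monomial (α + ee i) (((α i : ℝ) + 1)⁻¹ * coeff α p)

/-- Kill all monomials containing the variable `0` (i.e. evaluate `x₀ = 0`). -/
noncomputable def sub0 (p : MvPolynomial (Fin 3) ℝ) : MvPolynomial (Fin 3) ℝ :=
  ∑ α ∈ p.support, if α 0 = 0 then monomial α (coeff α p) else 0

lemma ee_apply (j x : Fin 3) : ee j x = if j = x then 1 else 0 := Finsupp.single_apply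

lemma add_ee_apply (α : Fin 3 →₀ ℕ) (j x : Fin 3) :
    (α + ee j) x = α x + (if j = x then 1 else 0) := by
  rw [Finsupp.add_apply, ee_apply]

lemma sub_ee_apply (α : Fin 3 →₀ ℕ) (j x : Fin 3) :
    (α - ee j) x = α x - (if j = x then 1 else 0) := by
  rw [Finsupp.tsub_apply, ee_apply]

lemma coeff_pderiv' (j : Fin 3) (p : MvPolynomial (Fin 3) ℝ) (α : Fin 3 →₀ ℕ) :
    coeff α (pderiv j p) = ((α j : ℝ) + 1) * coeff (α + ee j) p := by
  induction p using MvPolynomial.induction_on' with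
  | monomial β r =>
    rw [pderiv_monomial, coeff_monomial, coeff_monomial]
    by_cases hb : β = α + ee j
    · subst hb
      have h1 : α + ee j - Finsupp.single j 1 = α := add_tsub_cancel_right _ _
      have h2 : (α + ee j) j = α j + 1 := by
        rw [Finsupp.add_apply, ee_apply]; simp
      rw [if_pos h1, if_pos rfl, h2]
      push_cast; ring
    · rw [if_neg hb]
      split_ifs with h
      · have hβj : β j = 0 := by
          by_contra hne
          apply hb
          ext x
          have h' : β x - (Finsupp.single j 1) x = α x := by
            rw [← Finsupp.tsub_apply, h]
          rw [Finsupp.add_apply, ee_apply]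
          rw [Finsupp.single_apply] at h'
          rcases eq_or_ne j x with rfl | hjx
          · simp at h' ⊢; omega
          · simp [hjx] at h' ⊢; omega
        simp [hβj]
      · ring
  | add p q hp hq => simp only [map_add, coeff_add, hp, hq]; ring

lemma coeff_antid (i : Fin 3) (p : MvPolynomial (Fin 3) ℝ) (β : Fin 3 →₀ ℕ) :
    coeff β (antid i p) =
      if β i = 0 then 0 else ((β i : ℝ))⁻¹ * coeff (β - ee i) p := by
  rw [antid, coeff_sum]
  by_cases hβ : β i = 0
  · rw [if_pos hβ]
    apply Finset.sum_eq_zero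
    intro α hα
    rw [coeff_monomial, if_neg]
    intro h
    rw [← h] at hβ
    have : (α + ee i) i = α i + 1 := by
      rw [Finsupp.add_apply, ee, Finsupp.single_apply]; simp
    omega
  · rw [if_neg hβ]
    have key : ∀ α, (β - ee i = α) ↔ (α + ee i = β) := by
      intro α
      constructor
      · rintro rfl
        ext x
        rw [Finsupp.add_apply, Finsupp.tsub_apply, ee, Finsupp.single_apply]
        rcases eq_or_ne i x with rfl | hix
        · simp; omega
        · simp [hix]
      · rintro rfl
        ext x
        rw [Finsupp.tsub_apply, Finsupp.add_apply, ee, Finsupp.single_apply]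
        rcases eq_or_ne i x with rfl | hix
        · simp
        · simp [hix]
    have step : ∀ α ∈ p.support,
        coeff β (monomial (α + ee i) (((α i : ℝ) + 1)⁻¹ * coeff α p))
        = if β - ee i = α then ((α i : ℝ) + 1)⁻¹ * coeff α p else 0 := by
      intro α _
      rw [coeff_monomial, if_congr (key α) rfl rfl]
    rw [Finset.sum_congr rfl step, Finset.sum_ite_eq]
    have hsub : (β - ee i) i = β i - 1 := by
      rw [Finsupp.tsub_apply, ee, Finsupp.single_apply]; simp
    have hcast : (((β - ee i) i : ℝ) + 1) = (β i : ℝ) := by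
      rw [hsub]
      have : 1 ≤ β i := Nat.one_le_iff_ne_zero.mpr hβ
      push_cast [this]; ring
    by_cases hmem : β - ee i ∈ p.support
    · rw [if_pos hmem, hcast]
    · rw [if_neg hmem]
      rw [MvPolynomial.notMem_support_iff] at hmem
      rw [hmem, mul_zero]

lemma coeff_sub0 (p : MvPolynomial (Fin 3) ℝ) (β : Fin 3 →₀ ℕ) :
    coeff β (sub0 p) = if β 0 = 0 then coeff β p else 0 := by
  rw [sub0, coeff_sum]
  have step : ∀ α ∈ p.support,
      coeff β (if α 0 = 0 then monomial α (coeff α p) else 0)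
      = if α = β then (if β 0 = 0 then coeff β p else 0) else 0 := by
    intro α _
    rcases eq_or_ne α β with rfl | hne
    · simp only [if_pos rfl]
      by_cases h0 : α 0 = 0
      · simp [h0, coeff_monomial]
      · simp [h0]
    · rw [if_neg hne]
      split_ifs with h
      · rw [coeff_monomial, if_neg hne]
      · exact coeff_zero _
  rw [Finset.sum_congr rfl step, Finset.sum_ite_eq']
  by_cases hmem : β ∈ p.support
  · rw [if_pos hmem]
  · rw [if_neg hmem]
    rw [MvPolynomial.notMem_support_iff] at hmem
    simp [hmem]

lemma pderiv_antid_same (i : Fin 3) (p : MvPolynomial (Fin 3) ℝ) :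
    pderiv i (antid i p) = p := by
  apply MvPolynomial.ext
  intro β
  rw [coeff_pderiv', coeff_antid]
  have h1 : (β + ee i) i = β i + 1 := by rw [add_ee_apply]; simp
  rw [if_neg (by omega)]
  have h2 : β + ee i - ee i = β := by
    ext x; rw [sub_ee_apply, add_ee_apply]; split <;> omega
  rw [h2, h1]
  push_cast
  rw [← mul_assoc, mul_inv_cancel₀ (by positivity), one_mul]

lemma pderiv_antid_comm {i j : Fin 3} (h : j ≠ i) (p : MvPolynomial (Fin 3) ℝ) :
    pderiv j (antid i p) = antid i (pderiv j p) := by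
  apply MvPolynomial.ext
  intro β
  rw [coeff_pderiv', coeff_antid, coeff_antid]
  have h1 : (β + ee j) i = β i := by rw [add_ee_apply, if_neg h]; ring
  rw [h1]
  by_cases h0 : β i = 0
  · rw [if_pos h0, if_pos h0, mul_zero]
  · rw [if_neg h0, if_neg h0, coeff_pderiv']
    have h2 : (β - ee i) j = β j := by rw [sub_ee_apply, if_neg (Ne.symm h)]; omega
    have h3 : β + ee j - ee i = β - ee i + ee j := by
      ext x; rw [sub_ee_apply, add_ee_apply, add_ee_apply, sub_ee_apply]
      rcases eq_or_ne i x with rfl | hix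
      · rw [if_neg (by exact fun hh => h (hh.trans rfl))]; omega
      · split <;> omega
    rw [h2, h3]
    ring

lemma antid_zero (i : Fin 3) : antid i 0 = 0 := by
  apply MvPolynomial.ext; intro β
  rw [coeff_antid]; simp

lemma antid_add (i : Fin 3) (p q : MvPolynomial (Fin 3) ℝ) :
    antid i (p + q) = antid i p + antid i q := by
  apply MvPolynomial.ext; intro β
  rw [coeff_add, coeff_antid, coeff_antid, coeff_antid, coeff_add]
  split <;> ring

lemma antid_neg (i : Fin 3) (p : MvPolynomial (Fin 3) ℝ) :
    antid i (-p) = -(antid i p) := by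
  apply MvPolynomial.ext; intro β
  rw [coeff_neg, coeff_antid, coeff_antid, coeff_neg]
  split <;> ring

lemma pderiv_sub0 (p : MvPolynomial (Fin 3) ℝ) : pderiv 0 (sub0 p) = 0 := by
  apply MvPolynomial.ext; intro β
  rw [coeff_pderiv', coeff_sub0]
  have : (β + ee 0) 0 = β 0 + 1 := by rw [add_ee_apply]; simp
  rw [if_neg (by omega)]
  simp

lemma antid_pderiv_self (p : MvPolynomial (Fin 3) ℝ) :
    antid 0 (pderiv 0 p) = p - sub0 p := by
  apply MvPolynomial.ext; intro β
  rw [coeff_antid, coeff_sub, coeff_sub0]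
  by_cases h0 : β 0 = 0
  · rw [if_pos h0, if_pos h0]; ring
  · rw [if_neg h0, if_neg h0, coeff_pderiv']
    have h1 : β - ee 0 + ee 0 = β := by
      ext x; rw [add_ee_apply, sub_ee_apply]
      rcases eq_or_ne (0 : Fin 3) x with rfl | hx
      · simp; omega
      · simp [hx]
    have h2 : ((β - ee 0) 0 : ℝ) + 1 = (β 0 : ℝ) := by
      rw [sub_ee_apply]; simp
      have : 1 ≤ β 0 := Nat.one_le_iff_ne_zero.mpr h0
      push_cast [this]; ring
    rw [h1, h2, ← mul_assoc, inv_mul_cancel₀ (by exact_mod_cast h0), one_mul]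
    ring

lemma mem_support_pderiv {j : Fin 3} {p : MvPolynomial (Fin 3) ℝ} {α : Fin 3 →₀ ℕ}
    (h : α ∈ (pderiv j p).support) : α + ee j ∈ p.support := by
  rw [MvPolynomial.mem_support_iff] at h ⊢
  rw [coeff_pderiv'] at h
  intro hc
  rw [hc, mul_zero] at h
  exact h rfl

lemma mem_support_antid {i : Fin 3} {p : MvPolynomial (Fin 3) ℝ} {β : Fin 3 →₀ ℕ}
    (h : β ∈ (antid i p).support) : ∃ γ ∈ p.support, β = γ + ee i := by
  rw [MvPolynomial.mem_support_iff, coeff_antid] at h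
  by_cases h0 : β i = 0
  · rw [if_pos h0] at h; exact absurd rfl h
  · rw [if_neg h0] at h
    refine ⟨β - ee i, ?_, ?_⟩
    · rw [MvPolynomial.mem_support_iff]
      intro hc; rw [hc, mul_zero] at h; exact h rfl
    · ext x
      rw [add_ee_apply, sub_ee_apply]
      rcases eq_or_ne i x with rfl | hix
      · have : 1 ≤ β i := Nat.one_le_iff_ne_zero.mpr h0
        simp only [if_true, eq_self_iff_true]
        omega
      · simp [hix]

lemma expdeg (α : Fin 3 →₀ ℕ) : (α.sum fun _ e => e) = α 0 + α 1 + α 2 := by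
  rw [Finsupp.sum_fintype _ _ (fun _ => rfl), Fin.sum_univ_three]

lemma totalDegree_le_of_support {p : MvPolynomial (Fin 3) ℝ} {m : ℕ}
    (h : ∀ α ∈ p.support, α 0 + α 1 + α 2 ≤ m) : p.totalDegree ≤ m := by
  rw [totalDegree]
  apply Finset.sup_le
  intro α hα
  rw [expdeg]
  exact h α hα

lemma support_le_totalDegree {p : MvPolynomial (Fin 3) ℝ} {α : Fin 3 →₀ ℕ}
    (h : α ∈ p.support) : α 0 + α 1 + α 2 ≤ p.totalDegree := by
  rw [← expdeg]
  exact le_totalDegree h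

lemma ee_expsum (j : Fin 3) (α : Fin 3 →₀ ℕ) :
    (α + ee j) 0 + (α + ee j) 1 + (α + ee j) 2 = α 0 + α 1 + α 2 + 1 := by
  rw [add_ee_apply, add_ee_apply, add_ee_apply]
  fin_cases j <;> simp <;> omega

lemma totalDegree_antid_le (i : Fin 3) (p : MvPolynomial (Fin 3) ℝ) :
    (antid i p).totalDegree ≤ p.totalDegree + 1 := by
  apply totalDegree_le_of_support
  intro β hβ
  obtain ⟨γ, hγ, rfl⟩ := mem_support_antid hβ
  rw [ee_expsum]
  exact Nat.add_le_add_right (support_le_totalDegree hγ) 1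

lemma totalDegree_sub0_le (p : MvPolynomial (Fin 3) ℝ) :
    (sub0 p).totalDegree ≤ p.totalDegree := by
  apply totalDegree_le_of_support
  intro β hβ
  rw [MvPolynomial.mem_support_iff, coeff_sub0] at hβ
  by_cases h0 : β 0 = 0
  · rw [if_pos h0] at hβ
    exact support_le_totalDegree (MvPolynomial.mem_support_iff.mpr hβ)
  · rw [if_neg h0] at hβ; exact absurd rfl hβ

lemma totalDegree_pderiv_le' {j : Fin 3} {p : MvPolynomial (Fin 3) ℝ} {m : ℕ}
    (h : p.totalDegree ≤ m + 1) : (pderiv j p).totalDegree ≤ m := by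
  apply totalDegree_le_of_support
  intro α hα
  have h2 := support_le_totalDegree (mem_support_pderiv hα)
  rw [ee_expsum] at h2
  omega

lemma lap_eq (p : MvPolynomial (Fin 3) ℝ) :
    lap p = pderiv 0 (pderiv 0 p) + pderiv 1 (pderiv 1 p) + pderiv 2 (pderiv 2 p) := by
  rw [lap, Fin.sum_univ_three]

lemma lap_sub (p q : MvPolynomial (Fin 3) ℝ) : lap (p - q) = lap p - lap q := by
  rw [lap_eq, lap_eq, lap_eq]
  simp only [map_sub]
  ring

lemma lap_antid2 (q : MvPolynomial (Fin 3) ℝ) :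
    lap (antid 0 (antid 0 q)) = q + antid 0 (antid 0
      (pderiv 1 (pderiv 1 q) + pderiv 2 (pderiv 2 q))) := by
  rw [lap_eq]
  simp only [pderiv_antid_comm (show (1 : Fin 3) ≠ 0 from by decide),
    pderiv_antid_comm (show (2 : Fin 3) ≠ 0 from by decide), pderiv_antid_same, antid_add]
  ring

lemma lap_surj_aux : ∀ n : ℕ, ∀ q : MvPolynomial (Fin 3) ℝ,
    (∀ α ∈ q.support, α 1 + α 2 ≤ n) →
    ∃ φ, lap φ = q ∧ φ.totalDegree ≤ q.totalDegree + 2 := by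
  intro n
  induction n using Nat.strong_induction_on with
  | _ n IH =>
    intro q hq
    set r : MvPolynomial (Fin 3) ℝ :=
      pderiv 1 (pderiv 1 q) + pderiv 2 (pderiv 2 q) with hr
    have hdeg0 : (antid 0 (antid 0 q)).totalDegree ≤ q.totalDegree + 2 := by
      calc (antid 0 (antid 0 q)).totalDegree ≤ (antid 0 q).totalDegree + 1 :=
            totalDegree_antid_le _ _
        _ ≤ q.totalDegree + 2 := by
            have := totalDegree_antid_le 0 q; omega
    by_cases h0 : r = 0
    · refine ⟨antid 0 (antid 0 q), ?_, hdeg0⟩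
      rw [lap_antid2, ← hr, h0, antid_zero, antid_zero, add_zero]
    · have hrsupp : ∀ α ∈ r.support, α 1 + α 2 + 2 ≤ n := by
        intro α hα
        have := Finsupp.support_add hα
        rw [Finset.mem_union] at this
        rcases this with h | h
        · have h2 := mem_support_pderiv (mem_support_pderiv h)
          have := hq _ h2
          rw [add_ee_apply, add_ee_apply, add_ee_apply, add_ee_apply] at this
          simp at this
          omega
        · have h2 := mem_support_pderiv (mem_support_pderiv h)
          have := hq _ h2
          rw [add_ee_apply, add_ee_apply, add_ee_apply, add_ee_apply] at this
          simp at this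
          omega
      have hrdeg : ∀ α ∈ r.support, α 0 + α 1 + α 2 + 2 ≤ q.totalDegree := by
        intro α hα
        have := Finsupp.support_add hα
        rw [Finset.mem_union] at this
        rcases this with h | h <;>
        · have h2 := mem_support_pderiv (mem_support_pderiv h)
          have h3 := support_le_totalDegree h2
          rw [ee_expsum, ee_expsum] at h3
          omega
      have hn2 : 2 ≤ n := by
        obtain ⟨α, hα⟩ := (MvPolynomial.support_nonempty.mpr h0)
        have := hrsupp α hα
        omega
      set s := antid 0 (antid 0 r) with hs
      have hssupp : ∀ α ∈ s.support, α 1 + α 2 ≤ n - 2 := by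
        intro α hα
        obtain ⟨γ, hγ, rfl⟩ := mem_support_antid hα
        obtain ⟨δ, hδ, rfl⟩ := mem_support_antid hγ
        have := hrsupp δ hδ
        rw [add_ee_apply, add_ee_apply, add_ee_apply, add_ee_apply]
        simp
        omega
      have hsdeg : s.totalDegree ≤ q.totalDegree := by
        apply totalDegree_le_of_support
        intro α hα
        obtain ⟨γ, hγ, rfl⟩ := mem_support_antid hα
        obtain ⟨δ, hδ, rfl⟩ := mem_support_antid hγ
        have := hrdeg δ hδ
        rw [ee_expsum, ee_expsum]
        omega
      obtain ⟨ψ, hψ, hψd⟩ := IH (n - 2) (by omega) s hssupp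
      refine ⟨antid 0 (antid 0 q) - ψ, ?_, ?_⟩
      · rw [lap_sub, lap_antid2, ← hr, hψ, ← hs]
        ring
      · calc (antid 0 (antid 0 q) - ψ).totalDegree
            ≤ max (antid 0 (antid 0 q)).totalDegree ψ.totalDegree :=
              totalDegree_sub _ _
          _ ≤ q.totalDegree + 2 := by
              apply max_le hdeg0
              omega

lemma lap_surj (q : MvPolynomial (Fin 3) ℝ) :
    ∃ φ, lap φ = q ∧ φ.totalDegree ≤ q.totalDegree + 2 := by
  apply lap_surj_aux q.totalDegree
  intro α hα
  have := support_le_totalDegree hα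
  omega

lemma coeff_eq_zero_of_lt {p : MvPolynomial (Fin 3) ℝ} {α : Fin 3 →₀ ℕ}
    (h : p.totalDegree < α 0 + α 1 + α 2) : coeff α p = 0 := by
  by_contra hc
  exact absurd (support_le_totalDegree (MvPolynomial.mem_support_iff.mpr hc)) (by omega)

lemma pderiv_eq_zero_of_deg_zero {j : Fin 3} {p : MvPolynomial (Fin 3) ℝ}
    (h : p.totalDegree = 0) : pderiv j p = 0 := by
  apply MvPolynomial.ext
  intro β
  rw [coeff_pderiv', coeff_zero, coeff_eq_zero_of_lt (by rw [ee_expsum, h]; omega), mul_zero]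

/-- For `k ≥ 2`, every vector field with components in `𝒫^{k-2}(ℝ³)` is the sum of a curl of a
vector field with components in `𝒫^{k-1}(ℝ³)` and a gradient of a scalar in `𝒫^{k-1}(ℝ³)`. -/
theorem curl_add_grad_decomposition (k : ℕ) (hk : 2 ≤ k)
    (f : Fin 3 → MvPolynomial (Fin 3) ℝ) (hf : ∀ i, (f i).totalDegree ≤ k - 2) :
    ∃ (v₁ : Fin 3 → MvPolynomial (Fin 3) ℝ) (v₂ : MvPolynomial (Fin 3) ℝ),
      (∀ i, (v₁ i).totalDegree ≤ k - 1) ∧ v₂.totalDegree ≤ k - 1 ∧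
      ∀ i, f i = curl3 v₁ i + pderiv i v₂ := by
  -- a potential for the divergence
  have hφ : ∃ φ : MvPolynomial (Fin 3) ℝ, lap φ = pdiv f ∧ φ.totalDegree ≤ k - 1 := by
    rcases eq_or_lt_of_le hk with h2 | h3
    · -- k = 2 : pdiv f = 0
      have hdiv0 : pdiv f = 0 := by
        rw [pdiv, Fin.sum_univ_three]
        have hz : ∀ i : Fin 3, (f i).totalDegree = 0 :=
          fun i => Nat.le_zero.mp (by have := hf i; omega)
        rw [pderiv_eq_zero_of_deg_zero (hz 0), pderiv_eq_zero_of_deg_zero (hz 1),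
          pderiv_eq_zero_of_deg_zero (hz 2)]
        ring
      refine ⟨0, ?_, by simp⟩
      rw [hdiv0, lap_eq]
      simp
    · -- k ≥ 3
      obtain ⟨φ, h1, h2⟩ := lap_surj (pdiv f)
      refine ⟨φ, h1, ?_⟩
      have hdd : (pdiv f).totalDegree ≤ k - 3 := by
        rw [pdiv, Fin.sum_univ_three]
        have hb : ∀ i : Fin 3, (pderiv i (f i)).totalDegree ≤ k - 3 :=
          fun i => totalDegree_pderiv_le' (le_trans (hf i) (by omega))
        calc _ ≤ max ((pderiv 0 (f 0) + pderiv 1 (f 1)).totalDegree)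
                  (pderiv 2 (f 2)).totalDegree := totalDegree_add _ _
          _ ≤ k - 3 := by
            apply max_le _ (hb 2)
            exact le_trans (totalDegree_add _ _) (max_le (hb 0) (hb 1))
      omega
  obtain ⟨φ, hφ1, hφ2⟩ := hφ
  set g : Fin 3 → MvPolynomial (Fin 3) ℝ := fun i => f i - pderiv i φ with hg
  have hgdeg : ∀ i, (g i).totalDegree ≤ k - 2 := by
    intro i
    refine le_trans (totalDegree_sub _ _) (max_le (hf i) ?_)
    exact totalDegree_pderiv_le' (le_trans hφ2 (by omega))
  have hdivg : pderiv 0 (g 0) + pderiv 1 (g 1) + pderiv 2 (g 2) = 0 := by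
    have h1 := hφ1
    rw [lap_eq, pdiv, Fin.sum_univ_three] at h1
    simp only [hg, map_sub]
    linear_combination -h1
  set v : Fin 3 → MvPolynomial (Fin 3) ℝ :=
    ![0, antid 0 (g 2), antid 1 (sub0 (g 0)) - antid 0 (g 1)] with hv
  have hv0 : v 0 = 0 := rfl
  have hv1 : v 1 = antid 0 (g 2) := rfl
  have hv2 : v 2 = antid 1 (sub0 (g 0)) - antid 0 (g 1) := rfl
  have hcurl : ∀ i, curl3 v i = g i := by
    intro i
    fin_cases i
    · show pderiv 1 (v 2) - pderiv 2 (v 1) = g 0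
      rw [hv1, hv2, map_sub, pderiv_antid_same,
        pderiv_antid_comm (show (1 : Fin 3) ≠ 0 from by decide),
        pderiv_antid_comm (show (2 : Fin 3) ≠ 0 from by decide)]
      have h12 : pderiv 1 (g 1) + pderiv 2 (g 2) = -(pderiv 0 (g 0)) := by
        linear_combination hdivg
      have key : antid 0 (pderiv 1 (g 1)) + antid 0 (pderiv 2 (g 2))
          = -(g 0 - sub0 (g 0)) := by
        rw [← antid_add, h12, antid_neg, antid_pderiv_self]
      linear_combination -key
    · show pderiv 2 (v 0) - pderiv 0 (v 2) = g 1
      rw [hv0, hv2, map_sub, map_zero, pderiv_antid_same,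
        pderiv_antid_comm (show (0 : Fin 3) ≠ 1 from by decide), pderiv_sub0, antid_zero]
      ring
    · show pderiv 0 (v 1) - pderiv 1 (v 0) = g 2
      rw [hv0, hv1, map_zero, pderiv_antid_same]
      ring
  refine ⟨v, φ, ?_, hφ2, ?_⟩
  · intro i
    fin_cases i
    · show (0 : MvPolynomial (Fin 3) ℝ).totalDegree ≤ k - 1
      simp
    · show (antid 0 (g 2)).totalDegree ≤ k - 1
      refine le_trans (totalDegree_antid_le _ _) ?_
      have := hgdeg 2; omega
    · show (antid 1 (sub0 (g 0)) - antid 0 (g 1)).totalDegree ≤ k - 1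
      refine le_trans (totalDegree_sub _ _) (max_le ?_ ?_)
      · refine le_trans (totalDegree_antid_le _ _) ?_
        have h1 := totalDegree_sub0_le (g 0)
        have := hgdeg 0; omega
      · refine le_trans (totalDegree_antid_le _ _) ?_
        have := hgdeg 1; omega
  · intro i
    rw [hcurl i]
    simp [hg]
end

section
/- For every k ≥ 0, the curls of polynomial vector fields of degree at most k+1 on ℝ³ are exactly the divergence-free polynomial vector fields of degree at most k: {curl w : w a vector field with components in 𝒫^{k+1}(ℝ³)} = {u : u a vector field with components in 𝒫^k(ℝ³), div u = 0}. In particular, every u with components in 𝒫^k(ℝ³) satisfying div u = 0 equals curl w for some w with components in 𝒫^{k+1}(ℝ³). -/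
open MvPolynomial

section Aux
open Finset
abbrev P3 := MvPolynomial (Fin 3) ℝ

lemma single_add_tsub (s : Fin 3 →₀ ℕ) (i : Fin 3) (h : s i ≠ 0) :
    Finsupp.single i 1 + (s - Finsupp.single i 1) = s := by
  ext j
  simp only [Finsupp.add_apply, Finsupp.tsub_apply, Finsupp.single_apply]
  rcases eq_or_ne i j with rfl | hij
  · simp; omega
  · simp [hij]

lemma sum_eq_univ (s : Fin 3 →₀ ℕ) : (s.sum fun _ e => e) = s 0 + s 1 + s 2 := by
  rw [Finsupp.sum_fintype _ _ (fun _ => rfl), Fin.sum_univ_three]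

lemma tsub_single_sum (s : Fin 3 →₀ ℕ) (i : Fin 3) (h : s i ≠ 0) :
    ((s - Finsupp.single i 1).sum fun _ e => e) + 1 = s.sum fun _ e => e := by
  have h2 := congrArg (fun t : Fin 3 →₀ ℕ => t.sum fun _ e => e) (single_add_tsub s i h)
  rw [Finsupp.sum_add_index' (fun _ => rfl) (fun _ _ _ => rfl)] at h2
  rw [Finsupp.sum_single_index rfl] at h2
  omega

lemma tdeg_pderiv {n : ℕ} (i : Fin 3) {p : P3} (h : p.totalDegree ≤ n + 1) :
    (pderiv i p).totalDegree ≤ n := by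
  conv_lhs => rw [p.as_sum]
  rw [map_sum]
  refine (totalDegree_finset_sum _ _).trans (Finset.sup_le fun s hs => ?_)
  rw [pderiv_monomial]
  rcases eq_or_ne (s i) 0 with h0 | h0
  · simp [h0]
  · refine (totalDegree_monomial_le _ _).trans ?_
    have h1 := tsub_single_sum s i h0
    have h2 := (le_totalDegree hs).trans h
    have h3 : ((s - Finsupp.single i 1).sum fun _ => id)
        = ((s - Finsupp.single i 1).sum fun _ e => e) := rfl
    rw [h3]
    omega

lemma pderiv_comm (i j : Fin 3) (p : P3) :
    pderiv i (pderiv j p) = pderiv j (pderiv i p) := by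
  induction p using MvPolynomial.induction_on' with
  | add p q hp hq => simp [hp, hq]
  | monomial s a =>
    rcases eq_or_ne i j with rfl | hij
    · rfl
    · rw [pderiv_monomial, pderiv_monomial, pderiv_monomial, pderiv_monomial]
      have e1 : ((s - Finsupp.single j 1 : Fin 3 →₀ ℕ)) i = s i := by
        rw [Finsupp.tsub_apply, Finsupp.single_eq_of_ne hij, Nat.sub_zero]
      have e2 : ((s - Finsupp.single i 1 : Fin 3 →₀ ℕ)) j = s j := by
        rw [Finsupp.tsub_apply, Finsupp.single_eq_of_ne hij.symm, Nat.sub_zero]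
      have e3 : s - Finsupp.single j 1 - Finsupp.single i 1
          = s - Finsupp.single i 1 - Finsupp.single j 1 := by
        ext m; simp only [Finsupp.tsub_apply]; omega
      rw [e1, e2, e3, mul_right_comm]

lemma hc_monomial (m : ℕ) (s : Fin 3 →₀ ℕ) (a : ℝ) :
    homogeneousComponent m (monomial s a)
      = if (s.sum fun _ e => e) = m then monomial s a else 0 := by
  ext d
  rcases eq_or_ne s d with rfl | hsd
  · have hdeg : s.degree = s.sum fun _ e => e := rfl
    rw [coeff_homogeneousComponent]
    by_cases h : (s.sum fun _ e => e) = m <;> simp [h, hdeg, coeff_monomial]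
  · rw [coeff_homogeneousComponent]
    split_ifs <;> simp [coeff_monomial, hsd]

lemma pderiv_hc (i : Fin 3) (n : ℕ) (p : P3) :
    pderiv i (homogeneousComponent (n + 1) p) = homogeneousComponent n (pderiv i p) := by
  induction p using MvPolynomial.induction_on' with
  | add p q hp hq => simp [hp, hq]
  | monomial s a =>
    rcases eq_or_ne (s i) 0 with hi | hi
    · have hz : pderiv i (monomial s a) = 0 := by
        rw [pderiv_monomial, hi]; simp
      rw [hc_monomial]
      split_ifs with h <;> simp [hz]
    · have h1 := tsub_single_sum s i hi
      rw [hc_monomial, pderiv_monomial, hc_monomial]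
      split_ifs with h2 h3 h3
      · rw [pderiv_monomial]
      · omega
      · omega
      · simp

lemma X_mul_pderiv_monomial (j : Fin 3) (s : Fin 3 →₀ ℕ) (a : ℝ) :
    X j * pderiv j (monomial s a) = monomial s (a * s j) := by
  rw [pderiv_monomial]
  rcases eq_or_ne (s j) 0 with h | h
  · simp [h]
  · rw [X, monomial_mul, one_mul, single_add_tsub s j h]

lemma euler {n : ℕ} {p : P3} (hp : p.IsHomogeneous n) :
    X 0 * pderiv 0 p + X 1 * pderiv 1 p + X 2 * pderiv 2 p = C (n : ℝ) * p := by
  conv_lhs => rw [p.as_sum]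
  conv_rhs => rw [p.as_sum]
  rw [map_sum (pderiv 0), map_sum (pderiv 1), map_sum (pderiv 2), Finset.mul_sum,
    Finset.mul_sum, Finset.mul_sum, Finset.mul_sum, ← Finset.sum_add_distrib,
    ← Finset.sum_add_distrib]
  refine Finset.sum_congr rfl fun s hs => ?_
  have hd : (s.sum fun _ e => e) = n := by
    by_contra hne
    exact mem_support_iff.mp hs (hp.coeff_eq_zero (show s.degree ≠ n from hne))
  rw [X_mul_pderiv_monomial, X_mul_pderiv_monomial, X_mul_pderiv_monomial,
    C_mul_monomial, ← map_add, ← map_add]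
  congr 1
  have h2 := sum_eq_univ s
  rw [hd] at h2
  rw [h2]
  push_cast
  ring

/-- The cross product `v × x` of a polynomial vector field with the position field. -/
noncomputable def crossX (v : Fin 3 → P3) : Fin 3 → P3 :=
  ![v 1 * X 2 - v 2 * X 1, v 2 * X 0 - v 0 * X 2, v 0 * X 1 - v 1 * X 0]

lemma curl3_crossX {n : ℕ} {v : Fin 3 → P3} (hdiv : pdiv v = 0)
    (hp : ∀ i, (v i).IsHomogeneous n) (i : Fin 3) :
    curl3 (crossX v) i = (C (n : ℝ) + 2) * v i := by
  have hd : pderiv 0 (v 0) + pderiv 1 (v 1) + pderiv 2 (v 2) = 0 := by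
    simpa [pdiv, Fin.sum_univ_three] using hdiv
  have q01 : pderiv (1:Fin 3) (X (0:Fin 3) : P3) = 0 := pderiv_X_of_ne (by decide)
  have q02 : pderiv (2:Fin 3) (X (0:Fin 3) : P3) = 0 := pderiv_X_of_ne (by decide)
  have q10 : pderiv (0:Fin 3) (X (1:Fin 3) : P3) = 0 := pderiv_X_of_ne (by decide)
  have q12 : pderiv (2:Fin 3) (X (1:Fin 3) : P3) = 0 := pderiv_X_of_ne (by decide)
  have q20 : pderiv (0:Fin 3) (X (2:Fin 3) : P3) = 0 := pderiv_X_of_ne (by decide)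
  have q21 : pderiv (1:Fin 3) (X (2:Fin 3) : P3) = 0 := pderiv_X_of_ne (by decide)
  fin_cases i
  · show curl3 (crossX v) 0 = (C (n : ℝ) + 2) * v 0
    simp only [curl3, crossX, Matrix.cons_val_zero, Matrix.cons_val_one, Matrix.head_cons,
      Matrix.cons_val_two, Matrix.tail_cons, map_sub, pderiv_mul, pderiv_X_self,
      q01, q02, q10, q12, q20, q21, mul_one, mul_zero, add_zero, zero_add, Fin.isValue]
    linear_combination euler (hp 0) - X (0 : Fin 3) * hd
  · show curl3 (crossX v) 1 = (C (n : ℝ) + 2) * v 1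
    simp only [curl3, crossX, Matrix.cons_val_zero, Matrix.cons_val_one, Matrix.head_cons,
      Matrix.cons_val_two, Matrix.tail_cons, map_sub, pderiv_mul, pderiv_X_self,
      q01, q02, q10, q12, q20, q21, mul_one, mul_zero, add_zero, zero_add, Fin.isValue]
    linear_combination euler (hp 1) - X (1 : Fin 3) * hd
  · show curl3 (crossX v) 2 = (C (n : ℝ) + 2) * v 2
    simp only [curl3, crossX, Matrix.cons_val_zero, Matrix.cons_val_one, Matrix.head_cons,
      Matrix.cons_val_two, Matrix.tail_cons, map_sub, pderiv_mul, pderiv_X_self,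
      q01, q02, q10, q12, q20, q21, mul_one, mul_zero, add_zero, zero_add, Fin.isValue]
    linear_combination euler (hp 2) - X (2 : Fin 3) * hd

lemma pdiv_hc (u : Fin 3 → P3) (hdiv : pdiv u = 0) (n : ℕ) :
    pdiv (fun i => homogeneousComponent n (u i)) = 0 := by
  cases n with
  | zero => simp [pdiv, homogeneousComponent_zero, pderiv_C]
  | succ n =>
    simp only [pdiv, pderiv_hc]
    rw [← map_sum (homogeneousComponent n), show (∑ i, pderiv i (u i)) = pdiv u from rfl,
      hdiv, map_zero]

lemma sum_hc {k : ℕ} {p : P3} (h : p.totalDegree ≤ k) :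
    ∑ n ∈ Finset.range (k + 1), homogeneousComponent n p = p := by
  conv_rhs => rw [← sum_homogeneousComponent p]
  exact (Finset.sum_subset (Finset.range_subset_range.mpr (by omega))
    fun n hn hn2 => homogeneousComponent_eq_zero n p
      (by simp only [Finset.mem_range] at hn hn2; omega)).symm

lemma tdeg_crossX {n : ℕ} {v : Fin 3 → P3} (h : ∀ j, (v j).totalDegree ≤ n) (i : Fin 3) :
    ((crossX v) i).totalDegree ≤ n + 1 := by
  have key : ∀ a b : Fin 3, (v a * X b).totalDegree ≤ n + 1 := fun a b =>
    (totalDegree_mul _ _).trans (by have h1 := h a; have h2 := (totalDegree_X (R := ℝ) b); omega)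
  fin_cases i
  · exact (totalDegree_sub _ _).trans (max_le (key 1 2) (key 2 1))
  · exact (totalDegree_sub _ _).trans (max_le (key 2 0) (key 0 2))
  · exact (totalDegree_sub _ _).trans (max_le (key 0 1) (key 1 0))

lemma curl3_sum (t : Finset ℕ) (c : ℕ → ℝ) (f : ℕ → Fin 3 → P3) (i : Fin 3) :
    curl3 (fun j => ∑ n ∈ t, C (c n) * f n j) i = ∑ n ∈ t, C (c n) * curl3 (f n) i := by
  fin_cases i <;>
    [show curl3 _ 0 = ∑ n ∈ t, C (c n) * curl3 (f n) 0;
     show curl3 _ 1 = ∑ n ∈ t, C (c n) * curl3 (f n) 1;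
     show curl3 _ 2 = ∑ n ∈ t, C (c n) * curl3 (f n) 2] <;>
  · simp only [curl3, Matrix.cons_val_zero, Matrix.cons_val_one, Matrix.head_cons,
      Matrix.cons_val_two, Matrix.tail_cons, map_sum]
    rw [← Finset.sum_sub_distrib]
    refine Finset.sum_congr rfl fun n _ => ?_
    rw [pderiv_C_mul, pderiv_C_mul, mul_sub]

end Aux

/-- For every `k ≥ 0`, the curls of polynomial vector fields of degree at most `k + 1` on `ℝ³`
are exactly the divergence-free polynomial vector fields of degree at most `k`. -/
theorem curl_range_eq_divfree (k : ℕ) :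
    {u : Fin 3 → MvPolynomial (Fin 3) ℝ |
        ∃ w : Fin 3 → MvPolynomial (Fin 3) ℝ,
          (∀ i, (w i).totalDegree ≤ k + 1) ∧ u = curl3 w} =
      {u : Fin 3 → MvPolynomial (Fin 3) ℝ |
        (∀ i, (u i).totalDegree ≤ k) ∧ pdiv u = 0} := by
  ext u
  simp only [Set.mem_setOf_eq]
  constructor
  · rintro ⟨w, hw, rfl⟩
    constructor
    · intro i
      fin_cases i
      · exact (totalDegree_sub _ _).trans (max_le (tdeg_pderiv _ (hw 2)) (tdeg_pderiv _ (hw 1)))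
      · exact (totalDegree_sub _ _).trans (max_le (tdeg_pderiv _ (hw 0)) (tdeg_pderiv _ (hw 2)))
      · exact (totalDegree_sub _ _).trans (max_le (tdeg_pderiv _ (hw 1)) (tdeg_pderiv _ (hw 0)))
    · have e0 : curl3 w 0 = pderiv 1 (w 2) - pderiv 2 (w 1) := rfl
      have e1 : curl3 w 1 = pderiv 2 (w 0) - pderiv 0 (w 2) := rfl
      have e2 : curl3 w 2 = pderiv 0 (w 1) - pderiv 1 (w 0) := rfl
      rw [pdiv, Fin.sum_univ_three, e0, e1, e2, map_sub, map_sub, map_sub]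
      linear_combination pderiv_comm 0 1 (w 2) - pderiv_comm 0 2 (w 1) + pderiv_comm 1 2 (w 0)
  · rintro ⟨hu, hdiv⟩
    refine ⟨fun i => ∑ n ∈ Finset.range (k + 1),
      C (((n : ℝ) + 2)⁻¹) * crossX (fun j => homogeneousComponent n (u j)) i, ?_, ?_⟩
    · intro i
      refine (totalDegree_finset_sum _ _).trans (Finset.sup_le fun n hn => ?_)
      have hn' : n ≤ k := by have := Finset.mem_range.mp hn; omega
      have h1 : (C (((n : ℝ) + 2)⁻¹) *
          crossX (fun j => homogeneousComponent n (u j)) i).totalDegree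
          ≤ (crossX (fun j => homogeneousComponent n (u j)) i).totalDegree :=
        (totalDegree_mul _ _).trans (by simp)
      have hvdeg : ∀ j, ((homogeneousComponent n (u j) : P3)).totalDegree ≤ n :=
        fun j => (homogeneousComponent_isHomogeneous n (u j)).totalDegree_le
      exact h1.trans ((tdeg_crossX hvdeg i).trans (by omega))
    · funext i
      rw [curl3_sum]
      have key : ∀ n ∈ Finset.range (k + 1),
          C (((n : ℝ) + 2)⁻¹) * curl3 (crossX (fun j => homogeneousComponent n (u j))) i
            = homogeneousComponent n (u i) := by
        intro n _
        rw [curl3_crossX (pdiv_hc u hdiv n)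
          (fun j => homogeneousComponent_isHomogeneous n (u j)) i, ← mul_assoc]
        have h2 : ((2 : P3)) = C (2 : ℝ) := (map_ofNat (C : ℝ →+* P3) 2).symm
        rw [h2, ← map_add, ← map_mul, inv_mul_cancel₀ (by positivity), map_one, one_mul]
      rw [Finset.sum_congr rfl key]
      exact (sum_hc (hu i)).symm
end

section
/- Let k ≥ 2. The real vector space {(v,q) : v a vector field with components in 𝒫^k(ℝ²), q ∈ 𝒫^{k-1}(ℝ²), Δv = ∇q and div v = 0} (the local Trefftz space in dimension 2) has dimension 4k + 2. -/
open MvPolynomial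

/-- The local Trefftz space: pairs `(v, q)` with `v` a vector field with components of total
degree at most `k`, `q` of total degree at most `k - 1`, satisfying `Δv = ∇q` and `div v = 0`. -/
noncomputable def trefftzSpace (d k : ℕ) :
    Submodule ℝ ((Fin d → MvPolynomial (Fin d) ℝ) × MvPolynomial (Fin d) ℝ) where
  carrier := {vq | (∀ i, (vq.1 i).totalDegree ≤ k) ∧ vq.2.totalDegree ≤ k - 1 ∧
      (∀ i, lap (vq.1 i) = pderiv i vq.2) ∧ pdiv vq.1 = 0}
  add_mem' := by
    rintro ⟨v, q⟩ ⟨w, r⟩ ⟨hv, hq, hvq, hdv⟩ ⟨hw, hr, hwr, hdw⟩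
    refine ⟨fun i => le_trans (totalDegree_add _ _) (max_le (hv i) (hw i)),
      le_trans (totalDegree_add _ _) (max_le hq hr), fun i => ?_, ?_⟩
    · show lap (v i + w i) = pderiv i (q + r)
      simp [lap, Finset.sum_add_distrib, ← hvq i, ← hwr i]
    · show pdiv (v + w) = 0
      rw [show pdiv (v + w) = pdiv v + pdiv w by simp [pdiv, Finset.sum_add_distrib],
        hdv, hdw, add_zero]
  zero_mem' :=
    ⟨fun i => by simp, by simp, fun i => by simp [lap], by simp [pdiv]⟩
  smul_mem' := by
    rintro c ⟨v, q⟩ ⟨hv, hq, hvq, hdv⟩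
    refine ⟨fun i => le_trans (totalDegree_smul_le _ _) (hv i),
      le_trans (totalDegree_smul_le _ _) hq, fun i => ?_, ?_⟩
    · show lap (c • v i) = pderiv i (c • q)
      simp [lap, Finset.smul_sum, ← hvq i]
    · show pdiv (c • v) = 0
      rw [show pdiv (c • v) = c • pdiv v by simp [pdiv, Finset.smul_sum], hdv, smul_zero]

set_option maxHeartbeats 1000000
set_option synthInstance.maxHeartbeats 1000000

namespace TrefftzProof

theorem mem_trefftz {d k : ℕ} (vq : (Fin d → MvPolynomial (Fin d) ℝ) × MvPolynomial (Fin d) ℝ) :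
    vq ∈ trefftzSpace d k ↔ (∀ i, (vq.1 i).totalDegree ≤ k) ∧ vq.2.totalDegree ≤ k - 1 ∧
      (∀ i, lap (vq.1 i) = pderiv i vq.2) ∧ pdiv vq.1 = 0 := Iff.rfl

noncomputable def mono (r : ℝ) (a b : ℕ) : MvPolynomial (Fin 2) ℝ := C r * X 0 ^ a * X 1 ^ b


theorem pd0_mono (r : ℝ) (a b : ℕ) :
    pderiv (0 : Fin 2) (mono r a b) = mono (r * a) (a - 1) b := by
  cases a with
  | zero => simp [mono, pderiv_mul, pderiv_X_of_ne (show (1:Fin 2) ≠ 0 by decide)]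
  | succ a =>
      simp only [mono, pderiv_mul, pderiv_pow, pderiv_X_self, pderiv_C,
        pderiv_X_of_ne (show (1:Fin 2) ≠ 0 by decide), Nat.add_sub_cancel,
        mul_zero, zero_mul, add_zero, zero_add, mul_one]
      rw [show ((a+1 : ℕ) : MvPolynomial (Fin 2) ℝ) = C ((a+1 : ℕ) : ℝ) by push_cast; simp, C_mul]
      ring

theorem pd1_mono (r : ℝ) (a b : ℕ) :
    pderiv (1 : Fin 2) (mono r a b) = mono (r * b) a (b - 1) := by
  cases b with
  | zero => simp [mono, pderiv_mul, pderiv_X_of_ne (show (0:Fin 2) ≠ 1 by decide)]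
  | succ b =>
      simp only [mono, pderiv_mul, pderiv_pow, pderiv_X_self, pderiv_C,
        pderiv_X_of_ne (show (0:Fin 2) ≠ 1 by decide), Nat.add_sub_cancel,
        mul_zero, zero_mul, add_zero, zero_add, mul_one]
      rw [show ((b+1 : ℕ) : MvPolynomial (Fin 2) ℝ) = C ((b+1 : ℕ) : ℝ) by push_cast; simp, C_mul]
      ring

theorem mono_td_le (r : ℝ) (a b : ℕ) : (mono r a b).totalDegree ≤ a + b := by
  refine le_trans (totalDegree_mul _ _) ?_
  have h1 : (C r * X 0 ^ a : MvPolynomial (Fin 2) ℝ).totalDegree ≤ a :=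
    le_trans (totalDegree_mul _ _) (by simp [totalDegree_X_pow])
  have h2 : ((X 1 ^ b : MvPolynomial (Fin 2) ℝ)).totalDegree ≤ b := by simp [totalDegree_X_pow]
  omega

theorem smul_mono (c r : ℝ) (a b : ℕ) : c • mono r a b = mono (c * r) a b := by
  simp [mono, smul_eq_C_mul, mul_assoc]

theorem mono_zero_coeff (a b : ℕ) : mono 0 a b = 0 := by simp [mono]


theorem pderiv_comm {d : ℕ} (i j : Fin d) (p : MvPolynomial (Fin d) ℝ) :
    pderiv i (pderiv j p) = pderiv j (pderiv i p) := by
  induction p using MvPolynomial.induction_on' with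
  | add p q hp hq => simp [hp, hq]
  | monomial s a =>
      rcases eq_or_ne i j with rfl | hij
      · rfl
      · simp only [pderiv_monomial]
        rw [Finsupp.tsub_apply, Finsupp.tsub_apply,
          Finsupp.single_eq_of_ne hij, Finsupp.single_eq_of_ne (Ne.symm hij),
          tsub_tsub, tsub_tsub, add_comm (Finsupp.single j 1)]
        simp [mul_comm, mul_assoc, mul_left_comm]


theorem td_pderiv_le {d : ℕ} (i : Fin d) (p : MvPolynomial (Fin d) ℝ) {n : ℕ}
    (h : p.totalDegree ≤ n + 1) : (pderiv i p).totalDegree ≤ n := by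
  conv_lhs => rw [p.as_sum, map_sum]
  refine le_trans (totalDegree_finset_sum _ _) (Finset.sup_le fun s hs => ?_)
  rw [pderiv_monomial]
  rcases Nat.eq_zero_or_pos (s i) with h0 | h0
  · simp [h0]
  · refine le_trans (totalDegree_monomial_le _ _) ?_
    have hsum : (s.sum fun _ e => e) ≤ n + 1 := le_trans (le_totalDegree hs) h
    have e1 : (s.sum fun _ e => e) = ∑ j, s j := Finsupp.sum_fintype _ _ fun _ => rfl
    have e2 : ((s - Finsupp.single i 1).sum fun _ e => e) = ∑ j, ((s - Finsupp.single i 1 : Fin d →₀ ℕ)) j :=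
      Finsupp.sum_fintype _ _ fun _ => rfl
    rw [Finsupp.sum_fintype _ _ (fun _ => rfl)]
    simp only [id_eq]
    have key : ∀ j, ((s - Finsupp.single i 1 : Fin d →₀ ℕ)) j = s j - Finsupp.single i 1 j :=
      fun j => Finsupp.tsub_apply _ _ _
    have h3 : ∑ j, ((s - Finsupp.single i 1 : Fin d →₀ ℕ)) j
        = ∑ j ∈ Finset.univ.erase i, s j + (s i - 1) := by
      rw [← Finset.sum_erase_add _ _ (Finset.mem_univ i), key, Finsupp.single_eq_same]
      congr 1
      exact Finset.sum_congr rfl fun j hj => by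
        rw [key, Finsupp.single_eq_of_ne (Finset.ne_of_mem_erase hj)]; rfl
    have h4 : ∑ j, s j = ∑ j ∈ Finset.univ.erase i, s j + s i :=
      (Finset.sum_erase_add _ _ (Finset.mem_univ i)).symm
    rw [e1, h4] at hsum
    omega


theorem lap_eq (p : MvPolynomial (Fin 2) ℝ) :
    lap p = pderiv 0 (pderiv 0 p) + pderiv 1 (pderiv 1 p) := by
  simp [lap, Fin.sum_univ_two]

theorem lap_add (p q : MvPolynomial (Fin 2) ℝ) : lap (p + q) = lap p + lap q := by
  simp [lap_eq]; ring

theorem lap_smul (c : ℝ) (p : MvPolynomial (Fin 2) ℝ) : lap (c • p) = c • lap p := by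
  simp [lap_eq]

theorem lap_sub (p q : MvPolynomial (Fin 2) ℝ) : lap (p - q) = lap p - lap q := by
  simp [lap_eq]; ring

theorem lap_mono (r : ℝ) (a b : ℕ) :
    lap (mono r a b)
      = mono (r * a * ((a-1 : ℕ) : ℝ)) (a - 2) b + mono (r * b * ((b-1 : ℕ) : ℝ)) a (b - 2) := by
  rw [lap_eq, pd0_mono, pd0_mono, pd1_mono, pd1_mono]
  norm_num [Nat.sub_sub]

theorem lap_mono_surj : ∀ n m : ℕ, ∃ ψ : MvPolynomial (Fin 2) ℝ,
    lap ψ = mono 1 m n ∧ ψ.totalDegree ≤ m + n + 2 := by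
  intro n
  induction n using Nat.strong_induction_on with
  | _ n IH =>
    intro m
    have hm1 : ((m:ℝ)+1) ≠ 0 := by positivity
    have hm2 : ((m:ℝ)+2) ≠ 0 := by positivity
    set r : ℝ := (((m:ℝ)+1) * ((m:ℝ)+2))⁻¹ with hr
    have hcoef : r * ((m+2 : ℕ) : ℝ) * ((m+2-1 : ℕ) : ℝ) = 1 := by
      rw [show m+2-1 = m+1 from rfl, hr]
      push_cast
      field_simp
    have hlap0 : lap (mono r (m+2) n)
        = mono 1 m n + mono (r * ((n:ℕ) : ℝ) * ((n-1 : ℕ) : ℝ)) (m+2) (n-2) := by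
      rw [lap_mono, hcoef, show m+2-2 = m from rfl]
    rcases Nat.lt_or_ge n 2 with hn | hn
    · refine ⟨mono r (m+2) n, ?_, le_trans (mono_td_le _ _ _) (by omega)⟩
      rw [hlap0]
      have hz : r * ((n:ℕ) : ℝ) * ((n-1 : ℕ) : ℝ) = 0 := by
        interval_cases n <;> simp
      rw [hz, mono_zero_coeff, add_zero]
    · obtain ⟨ψ₁, h₁, hd₁⟩ := IH (n-2) (by omega) (m+2)
      set c : ℝ := r * ((n:ℕ) : ℝ) * ((n-1 : ℕ) : ℝ) with hc
      refine ⟨mono r (m+2) n - c • ψ₁, ?_, ?_⟩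
      · rw [lap_sub, lap_smul, hlap0, h₁, smul_mono, mul_one, add_sub_cancel_right]
      · rw [sub_eq_add_neg]
        refine le_trans (totalDegree_add _ _) (max_le (le_trans (mono_td_le _ _ _) (by omega)) ?_)
        rw [totalDegree_neg]
        exact le_trans (totalDegree_smul_le _ _) (by omega)


theorem CR_mono : ∀ n m : ℕ, ∃ q u : MvPolynomial (Fin 2) ℝ,
    pderiv 0 q + pderiv 1 u = mono 1 m n ∧ pderiv 0 u - pderiv 1 q = 0 ∧
    q.totalDegree ≤ m + n + 1 ∧ u.totalDegree ≤ m + n + 1 := by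
  intro n
  induction n using Nat.strong_induction_on with
  | _ n IH =>
    intro m
    have hm1 : ((m:ℝ)+1) ≠ 0 := by positivity
    set r : ℝ := ((m:ℝ)+1)⁻¹ with hr
    have hcoef : r * ((m+1 : ℕ) : ℝ) = 1 := by rw [hr]; push_cast; field_simp
    have hq0 : pderiv (0 : Fin 2) (mono r (m+1) n) = mono 1 m n := by
      rw [pd0_mono, hcoef, show m+1-1 = m from rfl]
    have hq1 : pderiv (1 : Fin 2) (mono r (m+1) n) = mono (r * n) (m+1) (n-1) :=
      pd1_mono r (m+1) n
    rcases Nat.eq_zero_or_pos n with hn | hn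
    · refine ⟨mono r (m+1) n, 0, by simp [hq0], ?_,
        le_trans (mono_td_le _ _ _) (by omega), by simp⟩
      subst hn
      rw [map_zero, hq1, zero_sub, neg_eq_zero, Nat.cast_zero, mul_zero, mono_zero_coeff]
    · obtain ⟨q', u', he1, he2, hdq, hdu⟩ := IH (n-1) (by omega) (m+1)
      set c : ℝ := r * n with hc
      refine ⟨mono r (m+1) n - c • u', c • q', ?_, ?_, ?_, ?_⟩
      · rw [map_sub, Derivation.map_smul, hq0, Derivation.map_smul, sub_add, ← smul_sub, he2, smul_zero, sub_zero]
      · rw [Derivation.map_smul, map_sub, Derivation.map_smul, hq1, sub_eq_zero, eq_sub_iff_add_eq,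
          ← smul_add, he1, smul_mono, mul_one]
      · rw [sub_eq_add_neg]
        refine le_trans (totalDegree_add _ _) (max_le (le_trans (mono_td_le _ _ _) (by omega)) ?_)
        rw [totalDegree_neg]
        exact le_trans (totalDegree_smul_le _ _) (by omega)
      · exact le_trans (totalDegree_smul_le _ _) (by omega)

theorem antider_mono (n m : ℕ) : ∃ h : MvPolynomial (Fin 2) ℝ,
    pderiv 0 h = mono 1 m n ∧ h.totalDegree ≤ m + n + 1 := by
  have hm1 : ((m:ℝ)+1) ≠ 0 := by positivity
  refine ⟨mono ((m:ℝ)+1)⁻¹ (m+1) n, ?_, le_trans (mono_td_le _ _ _) (by omega)⟩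
  rw [pd0_mono, show m+1-1 = m from rfl, show (((m+1 : ℕ)) : ℝ) = (m:ℝ)+1 by push_cast; ring,
    inv_mul_cancel₀ hm1]


theorem monomial_eq_mono (d : Fin 2 →₀ ℕ) (a : ℝ) :
    monomial d a = mono a (d 0) (d 1) := by
  rw [monomial_eq, mono, Finsupp.prod_fintype _ _ (fun i => pow_zero _), Fin.prod_univ_two,
    mul_assoc]

theorem finsupp_sum_eq (d : Fin 2 →₀ ℕ) : (d.sum fun _ e => e) = d 0 + d 1 := by
  rw [Finsupp.sum_fintype _ _ (fun _ => rfl), Fin.sum_univ_two]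

/-- generic extension: a property closed under the module operations that holds
for all monomials of degree ≤ N holds for all polynomials of degree ≤ N. -/
theorem extend_mono {N : ℕ} (S : Submodule ℝ (MvPolynomial (Fin 2) ℝ))
    (hmono : ∀ a b : ℕ, a + b ≤ N → mono 1 a b ∈ S)
    (f : MvPolynomial (Fin 2) ℝ) (hf : f.totalDegree ≤ N) : f ∈ S := by
  rw [f.as_sum]
  refine Submodule.sum_mem _ fun d hd => ?_
  rw [monomial_eq_mono, ← mul_one (coeff d f), ← smul_mono]
  refine Submodule.smul_mem _ _ (hmono _ _ ?_)
  rw [← finsupp_sum_eq]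
  exact le_trans (le_totalDegree hd) hf

theorem lap_surj {N : ℕ} (f : MvPolynomial (Fin 2) ℝ) (hf : f.totalDegree ≤ N) :
    ∃ ψ, lap ψ = f ∧ ψ.totalDegree ≤ N + 2 := by
  have := extend_mono (N := N)
    { carrier := {f | ∃ ψ, lap ψ = f ∧ ψ.totalDegree ≤ N + 2}
      add_mem' := by
        rintro p q ⟨ψ₁, h₁, d₁⟩ ⟨ψ₂, h₂, d₂⟩
        exact ⟨ψ₁ + ψ₂, by rw [lap_add, h₁, h₂],
          le_trans (totalDegree_add _ _) (max_le d₁ d₂)⟩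
      zero_mem' := ⟨0, by simp [lap], by simp⟩
      smul_mem' := by
        rintro c p ⟨ψ, h, dd⟩
        exact ⟨c • ψ, by rw [lap_smul, h], le_trans (totalDegree_smul_le _ _) dd⟩ }
    (fun a b hab => ?_) f hf
  · exact this
  · obtain ⟨ψ, h, dd⟩ := lap_mono_surj b a
    exact ⟨ψ, h, le_trans dd (by omega)⟩

theorem antider {N : ℕ} (f : MvPolynomial (Fin 2) ℝ) (hf : f.totalDegree ≤ N) :
    ∃ h, pderiv 0 h = f ∧ h.totalDegree ≤ N + 1 := by
  have := extend_mono (N := N)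
    { carrier := {f | ∃ h, pderiv 0 h = f ∧ h.totalDegree ≤ N + 1}
      add_mem' := by
        rintro p q ⟨h₁, e₁, d₁⟩ ⟨h₂, e₂, d₂⟩
        exact ⟨h₁ + h₂, by rw [map_add, e₁, e₂],
          le_trans (totalDegree_add _ _) (max_le d₁ d₂)⟩
      zero_mem' := ⟨0, by simp, by simp⟩
      smul_mem' := by
        rintro c p ⟨h, e, dd⟩
        exact ⟨c • h, by rw [Derivation.map_smul, e], le_trans (totalDegree_smul_le _ _) dd⟩ }
    (fun a b hab => ?_) f hf
  · exact this
  · obtain ⟨h, e, dd⟩ := antider_mono b a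
    exact ⟨h, e, le_trans dd (by omega)⟩

theorem CR_half {N : ℕ} (f : MvPolynomial (Fin 2) ℝ) (hf : f.totalDegree ≤ N) :
    ∃ q u, pderiv 0 q + pderiv 1 u = f ∧ pderiv 0 u - pderiv 1 q = 0 ∧
      q.totalDegree ≤ N + 1 ∧ u.totalDegree ≤ N + 1 := by
  have := extend_mono (N := N)
    { carrier := {f | ∃ q u, pderiv 0 q + pderiv 1 u = f ∧ pderiv 0 u - pderiv 1 q = 0 ∧
        q.totalDegree ≤ N + 1 ∧ u.totalDegree ≤ N + 1}
      add_mem' := by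
        rintro p p' ⟨q₁, u₁, e₁, f₁, dq₁, du₁⟩ ⟨q₂, u₂, e₂, f₂, dq₂, du₂⟩
        refine ⟨q₁ + q₂, u₁ + u₂, ?_, ?_, le_trans (totalDegree_add _ _) (max_le dq₁ dq₂),
          le_trans (totalDegree_add _ _) (max_le du₁ du₂)⟩
        · rw [map_add, map_add, ← e₁, ← e₂]; ring
        · rw [sub_eq_zero] at f₁ f₂
          rw [map_add, map_add, f₁, f₂]; ring
      zero_mem' := ⟨0, 0, by simp, by simp, by simp, by simp⟩
      smul_mem' := by
        rintro c p ⟨q, u, e, f0, dq, du⟩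
        refine ⟨c • q, c • u, ?_, ?_, le_trans (totalDegree_smul_le _ _) dq,
          le_trans (totalDegree_smul_le _ _) du⟩
        · rw [Derivation.map_smul, Derivation.map_smul, ← smul_add, e]
        · rw [Derivation.map_smul, Derivation.map_smul, ← smul_sub, f0, smul_zero] }
    (fun a b hab => ?_) f hf
  · exact this
  · obtain ⟨q, u, e, f0, dq, du⟩ := CR_mono b a
    exact ⟨q, u, e, f0, le_trans dq (by omega), le_trans du (by omega)⟩

/-- full CR solver with two general right-hand sides -/
theorem CR_full {N : ℕ} (a b : MvPolynomial (Fin 2) ℝ)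
    (ha : a.totalDegree ≤ N) (hb : b.totalDegree ≤ N) :
    ∃ q u, pderiv 0 q + pderiv 1 u = a ∧ pderiv 0 u - pderiv 1 q = b ∧
      q.totalDegree ≤ N + 1 ∧ u.totalDegree ≤ N + 1 := by
  obtain ⟨q₁, u₁, e₁, f₁, dq₁, du₁⟩ := CR_half a ha
  obtain ⟨q₂, u₂, e₂, f₂, dq₂, du₂⟩ := CR_half b hb
  refine ⟨q₁ - u₂, u₁ + q₂, ?_, ?_, ?_, ?_⟩
  · rw [map_sub, map_add, ← e₁]
    rw [sub_eq_zero] at f₂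
    rw [f₂]; ring
  · rw [map_add, map_sub, ← e₂]
    rw [sub_eq_zero] at f₁
    rw [f₁]; ring
  · rw [sub_eq_add_neg]
    refine le_trans (totalDegree_add _ _) (max_le dq₁ ?_)
    rw [totalDegree_neg]; exact du₂
  · exact le_trans (totalDegree_add _ _) (max_le du₁ dq₂)


theorem td_lap_le (p : MvPolynomial (Fin 2) ℝ) {n : ℕ} (h : p.totalDegree ≤ n + 2) :
    (lap p).totalDegree ≤ n := by
  rw [lap_eq]
  refine le_trans (totalDegree_add _ _) (max_le ?_ ?_) <;>
    exact td_pderiv_le _ _ (td_pderiv_le _ _ h)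

theorem lap_pderiv (i : Fin 2) (p : MvPolynomial (Fin 2) ℝ) :
    lap (pderiv i p) = pderiv i (lap p) := by
  rw [lap_eq, lap_eq, map_add, pderiv_comm 0 i p, pderiv_comm 0 i (pderiv 0 p),
    pderiv_comm 1 i p, pderiv_comm 1 i (pderiv 1 p)]

theorem solve_system (k : ℕ) (hk : 2 ≤ k) (f0 f1 g : MvPolynomial (Fin 2) ℝ)
    (hf0 : f0.totalDegree ≤ k - 2) (hf1 : f1.totalDegree ≤ k - 2) (hg : g.totalDegree ≤ k - 1) :
    ∃ v0 v1 q : MvPolynomial (Fin 2) ℝ,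
      v0.totalDegree ≤ k ∧ v1.totalDegree ≤ k ∧ q.totalDegree ≤ k - 1 ∧
      lap v0 - pderiv 0 q = f0 ∧ lap v1 - pderiv 1 q = f1 ∧
      pderiv 0 v0 + pderiv 1 v1 = g := by
  obtain ⟨h, hD, hdh⟩ := antider g hg
  have hdh' : h.totalDegree ≤ k := le_trans hdh (by omega)
  have hlh : (lap h).totalDegree ≤ k - 2 := td_lap_le h (by omega)
  have hda : (lap h - f0).totalDegree ≤ k - 2 := by
    rw [sub_eq_add_neg]
    refine le_trans (totalDegree_add _ _) (max_le hlh ?_)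
    rw [totalDegree_neg]; exact hf0
  obtain ⟨q, u, e1, e2, hdq, hdu⟩ := CR_full (lap h - f0) f1 hda hf1
  obtain ⟨ψ, hψ, hdψ⟩ := lap_surj (N := k-1) u (le_trans hdu (by omega))
  have hdψ' : ψ.totalDegree ≤ k + 1 := le_trans hdψ (by omega)
  refine ⟨h - pderiv 1 ψ, pderiv 0 ψ, q, ?_, ?_, le_trans hdq (by omega), ?_, ?_, ?_⟩
  · rw [sub_eq_add_neg]
    refine le_trans (totalDegree_add _ _) (max_le hdh' ?_)
    rw [totalDegree_neg]
    exact td_pderiv_le _ _ hdψ'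
  · exact td_pderiv_le _ _ hdψ'
  · rw [lap_sub, lap_pderiv, hψ, sub_sub, add_comm (pderiv 1 u) (pderiv 0 q), e1,
      sub_sub_cancel]
  · rw [lap_pderiv, hψ]
    exact e2
  · rw [map_sub, hD, pderiv_comm 0 1 ψ, sub_add_cancel]


theorem card_pairs (n : ℕ) :
    2 * Nat.card {p : ℕ × ℕ // p.1 + p.2 ≤ n} = (n+1) * (n+2) := by
  classical
  have hT : ∀ p : ℕ × ℕ, p ∈ (Finset.range (n+1)).biUnion (fun m => Finset.HasAntidiagonal.antidiagonal m)
      ↔ p.1 + p.2 ≤ n := by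
    intro p
    simp only [Finset.mem_biUnion, Finset.mem_range, Finset.HasAntidiagonal.mem_antidiagonal]
    constructor
    · rintro ⟨m, hm, rfl⟩; omega
    · intro h; exact ⟨p.1 + p.2, by omega, rfl⟩
  haveI : Fintype {p : ℕ × ℕ // p.1 + p.2 ≤ n} := Fintype.ofFinset _ hT
  rw [Nat.card_eq_fintype_card, Fintype.card_of_subtype _ hT]
  rw [Finset.card_biUnion]
  · have : ∀ m ∈ Finset.range (n+1), (Finset.HasAntidiagonal.antidiagonal m).card = m + 1 := fun m _ =>
      Finset.Nat.card_antidiagonal m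
    rw [Finset.sum_congr rfl this]
    have h2 : (∑ m ∈ Finset.range (n+1), (m+1)) = ∑ i ∈ Finset.range (n+2), i := by
      rw [Finset.sum_range_succ' (fun i => i) (n+1)]
      simp
    rw [h2, mul_comm 2, Finset.sum_range_id_mul_two, show n+2-1 = n+1 from rfl, mul_comm]
  · intro i _ j _ hij
    simp only [Finset.disjoint_left, Finset.HasAntidiagonal.mem_antidiagonal]
    rintro p rfl h
    exact hij h

theorem two_mul_finrank_rtd (n : ℕ) :
    2 * Module.finrank ℝ (restrictTotalDegree (Fin 2) ℝ n) = (n+1) * (n+2) := by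
  classical
  set s : Set (Fin 2 →₀ ℕ) := {d | (d.sum fun _ e => e) ≤ n} with hs
  have hb : Module.Basis s ℝ (restrictTotalDegree (Fin 2) ℝ n) := basisRestrictSupport ℝ s
  let Eq1 : (Fin 2 →₀ ℕ) ≃ ℕ × ℕ :=
    Finsupp.equivFunOnFinite.trans (piFinTwoEquiv fun _ => ℕ)
  have hsum : ∀ d : Fin 2 →₀ ℕ, (d.sum fun _ e => e) = d 0 + d 1 := fun d => by
    rw [Finsupp.sum_fintype _ _ (fun _ => rfl), Fin.sum_univ_two]
  have E : s ≃ {p : ℕ × ℕ // p.1 + p.2 ≤ n} :=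
    Equiv.subtypeEquiv Eq1 (fun d => by simp only [hs, Set.mem_setOf_eq, hsum d]; exact Iff.rfl)
  haveI : Fintype {p : ℕ × ℕ // p.1 + p.2 ≤ n} := by
    have hT : ∀ p : ℕ × ℕ, p ∈ (Finset.range (n+1)).biUnion (fun m => Finset.HasAntidiagonal.antidiagonal m)
        ↔ p.1 + p.2 ≤ n := by
      intro p
      simp only [Finset.mem_biUnion, Finset.mem_range, Finset.HasAntidiagonal.mem_antidiagonal]
      constructor
      · rintro ⟨m, hm, rfl⟩; omega
      · intro h; exact ⟨p.1 + p.2, by omega, rfl⟩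
    exact Fintype.ofFinset _ hT
  haveI : Fintype s := Fintype.ofEquiv _ E.symm
  rw [Module.finrank_eq_card_basis hb, Fintype.card_congr E, ← Nat.card_eq_fintype_card]
  exact card_pairs n


section Assembly

abbrev P2 := MvPolynomial (Fin 2) ℝ
noncomputable abbrev RTD (n : ℕ) : Submodule ℝ P2 := restrictTotalDegree (Fin 2) ℝ n

noncomputable def pdL (i : Fin 2) : P2 →ₗ[ℝ] P2 := (pderiv i).toLinearMap

@[simp] lemma pdL_apply (i : Fin 2) (p : P2) : pdL i p = pderiv i p := rfl

noncomputable def lapL : P2 →ₗ[ℝ] P2 := pdL 0 ∘ₗ pdL 0 + pdL 1 ∘ₗ pdL 1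

@[simp] lemma lapL_apply (p : P2) : lapL p = lap p := by
  rw [lap_eq]; rfl

theorem pdiv_eq (v : Fin 2 → P2) : pdiv v = pderiv 0 (v 0) + pderiv 1 (v 1) := by
  simp [pdiv, Fin.sum_univ_two]

variable (k : ℕ) (hk : 2 ≤ k)

noncomputable abbrev Vm := (Fin 2 → RTD k) × RTD (k-1)
noncomputable abbrev Wm := (Fin 2 → RTD (k-2)) × RTD (k-1)

/-- the `i`-th component `v i` as ambient polynomial -/
noncomputable def vc (i : Fin 2) : Vm k →ₗ[ℝ] P2 :=
  (RTD k).subtype ∘ₗ (LinearMap.proj i) ∘ₗ (LinearMap.fst ℝ _ _)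

noncomputable def qc : Vm k →ₗ[ℝ] P2 := (RTD (k-1)).subtype ∘ₗ LinearMap.snd ℝ _ _

@[simp] lemma vc_apply (i : Fin 2) (x : Vm k) : vc k i x = (x.1 i : P2) := rfl
@[simp] lemma qc_apply (x : Vm k) : qc k x = (x.2 : P2) := rfl

noncomputable def Fmom (i : Fin 2) : Vm k →ₗ[ℝ] P2 :=
  lapL ∘ₗ vc k i - pdL i ∘ₗ qc k

noncomputable def Fdiv : Vm k →ₗ[ℝ] P2 := pdL 0 ∘ₗ vc k 0 + pdL 1 ∘ₗ vc k 1

@[simp] lemma Fmom_apply (i : Fin 2) (x : Vm k) :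
    Fmom k i x = lap (x.1 i : P2) - pderiv i (x.2 : P2) := by
  simp [Fmom, lapL, pdL, lap_eq]

@[simp] lemma Fdiv_apply (x : Vm k) :
    Fdiv k x = pdiv (fun i => (x.1 i : P2)) := by
  rw [pdiv_eq]; rfl

include hk in
theorem Fmom_mem (i : Fin 2) (x : Vm k) : Fmom k i x ∈ RTD (k-2) := by
  rw [mem_restrictTotalDegree, Fmom_apply, sub_eq_add_neg]
  refine le_trans (totalDegree_add _ _) (max_le ?_ ?_)
  · refine td_lap_le _ ?_
    have := (mem_restrictTotalDegree _ _ _).mp (x.1 i).2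
    omega
  · rw [totalDegree_neg]
    refine td_pderiv_le _ _ ?_
    have := (mem_restrictTotalDegree _ _ _).mp x.2.2
    omega

include hk in
theorem Fdiv_mem (x : Vm k) : Fdiv k x ∈ RTD (k-1) := by
  rw [mem_restrictTotalDegree, Fdiv_apply, pdiv_eq]
  refine le_trans (totalDegree_add _ _) (max_le ?_ ?_)
  · refine td_pderiv_le _ _ ?_
    have := (mem_restrictTotalDegree _ _ _).mp (x.1 0).2
    omega
  · refine td_pderiv_le _ _ ?_
    have := (mem_restrictTotalDegree _ _ _).mp (x.1 1).2
    omega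

noncomputable def Fmap : Vm k →ₗ[ℝ] Wm k :=
  (LinearMap.pi fun i => (Fmom k i).codRestrict (RTD (k-2)) (Fmom_mem k hk i)).prod
    ((Fdiv k).codRestrict (RTD (k-1)) (Fdiv_mem k hk))

include hk in
theorem Fmap_surjective : Function.Surjective (Fmap k hk) := by
  rintro ⟨f, g⟩
  obtain ⟨v0, v1, q, hv0, hv1, hq, he0, he1, hdiv⟩ :=
    solve_system k hk (f 0 : P2) (f 1 : P2) (g : P2)
      ((mem_restrictTotalDegree _ _ _).mp (f 0).2)
      ((mem_restrictTotalDegree _ _ _).mp (f 1).2)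
      ((mem_restrictTotalDegree _ _ _).mp g.2)
  refine ⟨(![⟨v0, (mem_restrictTotalDegree _ _ _).mpr hv0⟩,
      ⟨v1, (mem_restrictTotalDegree _ _ _).mpr hv1⟩],
      ⟨q, (mem_restrictTotalDegree _ _ _).mpr hq⟩), ?_⟩
  apply Prod.ext
  · funext i
    apply Subtype.ext
    show Fmom k i _ = (f i : P2)
    rw [Fmom_apply]
    fin_cases i
    · simpa using he0
    · simpa using he1
  · apply Subtype.ext
    show Fdiv k _ = (g : P2)
    rw [Fdiv_apply, pdiv_eq]
    simpa using hdiv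

end Assembly


end TrefftzProof

open TrefftzProof in
/-- For `k ≥ 2`, the local Trefftz space in dimension 2 has dimension `4k + 2`. -/
theorem finrank_trefftzSpace_dim2 (k : ℕ) (hk : 2 ≤ k) :
    Module.finrank ℝ (trefftzSpace 2 k) = 4 * k + 2 := by

  classical
  -- the comparison map from `ker Fmap` to the Trefftz space
  let Φ : Vm k →ₗ[ℝ] ((Fin 2 → P2) × P2) :=
    (LinearMap.pi fun i => (RTD k).subtype ∘ₗ LinearMap.proj i).prodMap ((RTD (k-1)).subtype)
  have hΦ : ∀ x : Vm k, Φ x = (fun i => (x.1 i : P2), (x.2 : P2)) := fun x => rfl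
  have hmemT : ∀ x : LinearMap.ker (Fmap k hk), Φ x.1 ∈ trefftzSpace 2 k := by
    rintro ⟨x, hx⟩
    rw [LinearMap.mem_ker] at hx
    rw [hΦ, mem_trefftz]
    refine ⟨fun i => (mem_restrictTotalDegree _ _ _).mp (x.1 i).2,
      (mem_restrictTotalDegree _ _ _).mp x.2.2, fun i => ?_, ?_⟩
    · have : Fmom k i x = 0 := by
        have := congrArg (fun w => ((w.1 i : RTD (k-2)) : P2)) hx
        simpa [Fmap] using this
      rw [Fmom_apply] at this
      exact sub_eq_zero.mp this
    · have : Fdiv k x = 0 := by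
        have := congrArg (fun w => (w.2 : P2)) hx
        simpa [Fmap] using this
      rw [Fdiv_apply] at this
      exact this
  let G : LinearMap.ker (Fmap k hk) →ₗ[ℝ] trefftzSpace 2 k :=
    (Φ ∘ₗ (LinearMap.ker (Fmap k hk)).subtype).codRestrict _ hmemT
  have hGbij : Function.Bijective G := by
    constructor
    · intro x y hxy
      have h1 : Φ x.1 = Φ y.1 := congrArg Subtype.val hxy
      rw [hΦ, hΦ] at h1
      have h2 : ∀ i, (x.1.1 i : P2) = (y.1.1 i : P2) := fun i =>
        congrFun (congrArg Prod.fst h1) i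
      have h3 : (x.1.2 : P2) = (y.1.2 : P2) := congrArg Prod.snd h1
      exact Subtype.ext (Prod.ext (funext fun i => Subtype.ext (h2 i)) (Subtype.ext h3))
    · rintro ⟨⟨v, q⟩, ht⟩
      rw [mem_trefftz] at ht
      obtain ⟨hdv, hdq, heq, hdiv⟩ := ht
      set x : Vm k := (fun i => ⟨v i, (mem_restrictTotalDegree _ _ _).mpr (hdv i)⟩,
        ⟨q, (mem_restrictTotalDegree _ _ _).mpr hdq⟩) with hxdef
      have hxker : x ∈ LinearMap.ker (Fmap k hk) := by
        rw [LinearMap.mem_ker]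
        refine Prod.ext (funext fun i => Subtype.ext ?_) (Subtype.ext ?_)
        · show Fmom k i x = 0
          rw [Fmom_apply]
          simpa [hxdef] using sub_eq_zero.mpr (heq i)
        · show Fdiv k x = 0
          rw [Fdiv_apply]
          exact hdiv
      exact ⟨⟨x, hxker⟩, Subtype.ext rfl⟩
  -- dimension count
  haveI : FiniteDimensional ℝ (Vm k) := by infer_instance
  have hrn := LinearMap.finrank_range_add_finrank_ker (Fmap k hk)
  rw [LinearMap.range_eq_top.mpr (Fmap_surjective k hk), finrank_top] at hrn
  have hker : Module.finrank ℝ (LinearMap.ker (Fmap k hk))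
      = Module.finrank ℝ (trefftzSpace 2 k) :=
    (LinearEquiv.ofBijective G hGbij).finrank_eq
  have hVm : Module.finrank ℝ (Vm k)
      = 2 * Module.finrank ℝ (RTD k) + Module.finrank ℝ (RTD (k-1)) := by
    rw [Module.finrank_prod, Module.finrank_pi_fintype, Fin.sum_univ_two]
    ring
  have hWm : Module.finrank ℝ (Wm k)
      = 2 * Module.finrank ℝ (RTD (k-2)) + Module.finrank ℝ (RTD (k-1)) := by
    rw [Module.finrank_prod, Module.finrank_pi_fintype, Fin.sum_univ_two]
    ring
  obtain ⟨n, rfl⟩ : ∃ n, k = n + 2 := ⟨k-2, by omega⟩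
  have h1 : 2 * Module.finrank ℝ (RTD (n+2)) = (n+3)*(n+4) := two_mul_finrank_rtd (n+2)
  have h2 : 2 * Module.finrank ℝ (RTD (n+2-1)) = (n+2)*(n+3) := two_mul_finrank_rtd (n+1)
  have h3 : 2 * Module.finrank ℝ (RTD (n+2-2)) = (n+1)*(n+2) := two_mul_finrank_rtd n
  have key : (n+3)*(n+4) = (n+1)*(n+2) + (4*n+10) := by ring
  omega
end
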